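/- arXiv:2405.11477 — 4 statements merged into one kernel-verified Lean document; each statement's English description precedes it below -/
import Mathlib

section
/- Lemma (C.6, first assertion). For each m ∈ {1,…,M} and every measurable function q : ℝ^{p − #𝒳(m)} → ℝ with E|q(X_{−𝒳(m)})| < ∞, it holds almost surely that | E q(X_{−𝒳(m)}) − E( q(X_{−𝒳(m)}) | X_{𝒳(m)} ) | ≤ δ₀ E|q(X_{−𝒳(m)})| / ( min_{1≤m'≤M, l∈𝒳(m'), a∈{0,1}} P(X_l = a) ), provided the minimum in the denominator is strictly positive. -/
open MeasureTheory ProbabilityTheory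

noncomputable section

namespace CT9

/-- The sub-σ-algebra of `Ω` generated by the coordinates of `X` lying in `S`. -/
def coordSigma {Ω : Type*} [MeasurableSpace Ω] {p : ℕ} (X : Ω → Fin p → Bool)
    (S : Finset (Fin p)) : MeasurableSpace Ω :=
  MeasurableSpace.comap (fun ω => fun i : {x // x ∈ S} => X ω i.1) inferInstance

/-- `𝒳(J)`, the union of the feature groups indexed by `J`. -/
def gset {p M : ℕ} (G : Fin M → Finset (Fin p)) (J : Finset (Fin M)) : Finset (Fin p) :=
  J.biUnion G

/-- `{1,…,p} \ 𝒳(J)` as a finset. -/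
def gsetCompl {p M : ℕ} (G : Fin M → Finset (Fin p)) (J : Finset (Fin M)) :
    Finset (Fin p) :=
  (J.biUnion G)ᶜ

/-- The conditional probability `P(X_i = 1 | X_{-𝒳(m)})` as a random variable. -/
def condProbOne {Ω : Type*} [MeasurableSpace Ω] {p M : ℕ} (μ : Measure Ω)
    (X : Ω → Fin p → Bool) (G : Fin M → Finset (Fin p)) (m : Fin M) (i : Fin p) : Ω → ℝ :=
  μ[(fun ω => if X ω i then (1 : ℝ) else 0) | coordSigma X (gsetCompl G {m})]

lemma condexp_comap_discrete {Ω β : Type*} [MeasurableSpace Ω] [MeasurableSpace β] [Fintype β]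
    [DiscreteMeasurableSpace β] (μ : Measure Ω) [IsProbabilityMeasure μ]
    (T : Ω → β) (hT : Measurable T) {f : Ω → ℝ} (hf : Integrable f μ) :
    (fun ω => (∫ x in T ⁻¹' {T ω}, f x ∂μ) / (μ (T ⁻¹' {T ω})).toReal)
      =ᵐ[μ] μ[f | MeasurableSpace.comap T inferInstance] := by
  have hm : MeasurableSpace.comap T inferInstance ≤ ‹MeasurableSpace Ω› := hT.comap_le
  haveI : SigmaFinite (μ.trim hm) := inferInstance
  set h : β → ℝ := fun v => (∫ x in T ⁻¹' {v}, f x ∂μ) / (μ (T ⁻¹' {v})).toReal with hh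
  have hgsum : (fun ω => h (T ω))
      = fun ω => ∑ v : β, (T ⁻¹' {v}).indicator (fun _ => h v) ω := by
    funext ω
    rw [Finset.sum_eq_single (T ω)]
    · simp
    · intro v _ hv
      exact Set.indicator_of_notMem (by simpa using hv.symm) _
    · simp
  have hint : Integrable (fun ω => h (T ω)) μ := by
    rw [hgsum]
    exact integrable_finset_sum _ fun v _ =>
      (integrable_const (h v)).indicator (hT (measurableSet_singleton v))
  refine ae_eq_condExp_of_forall_setIntegral_eq hm hf
      (fun s _ _ => hint.integrableOn) (fun s hs _ => ?_) ?_
  · obtain ⟨B, -, rfl⟩ := hs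
    have hBm : MeasurableSet (T ⁻¹' B) := hT .of_discrete
    have hsplit : T ⁻¹' B = ⋃ v ∈ B.toFinite.toFinset, T ⁻¹' {v} := by
      ext x; simp
    have hterm : ∀ v : β, (μ (T ⁻¹' {v})).toReal * h v = ∫ x in T ⁻¹' {v}, f x ∂μ := by
      intro v
      by_cases h0 : μ (T ⁻¹' {v}) = 0
      · rw [Measure.restrict_eq_zero.mpr h0]; simp [h0]
      · rw [hh]
        field_simp [ENNReal.toReal_ne_zero, h0, measure_ne_top]
    calc ∫ x in T ⁻¹' B, h (T x) ∂μ
        = ∑ v : β, ∫ x in T ⁻¹' B, (T ⁻¹' {v}).indicator (fun _ => h v) x ∂μ := by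
          rw [hgsum]
          exact integral_finset_sum _ fun v _ =>
            ((integrable_const (h v)).indicator (hT (measurableSet_singleton v))).integrableOn
      _ = ∑ v : β, (μ (T ⁻¹' {v} ∩ T ⁻¹' B)).toReal * h v := by
          refine Finset.sum_congr rfl fun v _ => ?_
          rw [integral_indicator (hT (measurableSet_singleton v)), setIntegral_const, Measure.real_def,
            Measure.restrict_apply (hT (measurableSet_singleton v))]
          simp [mul_comm]
      _ = ∑ v ∈ B.toFinite.toFinset, (μ (T ⁻¹' {v})).toReal * h v := by
          have e1 : ∀ v, v ∉ B → T ⁻¹' {v} ∩ T ⁻¹' B = ∅ := by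
            intro v hv
            ext x
            simp only [Set.mem_inter_iff, Set.mem_preimage, Set.mem_singleton_iff,
              Set.mem_empty_iff_false, iff_false, not_and]
            rintro rfl; exact hv
          have e2 : ∀ v, v ∈ B → T ⁻¹' {v} ∩ T ⁻¹' B = T ⁻¹' {v} := by
            intro v hv
            ext x
            simp only [Set.mem_inter_iff, Set.mem_preimage, Set.mem_singleton_iff,
              and_iff_left_iff_imp]
            rintro rfl; exact hv
          calc ∑ v : β, (μ (T ⁻¹' {v} ∩ T ⁻¹' B)).toReal * h v
              = ∑ v ∈ B.toFinite.toFinset, (μ (T ⁻¹' {v} ∩ T ⁻¹' B)).toReal * h v :=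
                (Finset.sum_subset (Finset.subset_univ _) (fun v _ hv => by
                  rw [e1 v (by simpa using hv)]; simp)).symm
            _ = ∑ v ∈ B.toFinite.toFinset, (μ (T ⁻¹' {v})).toReal * h v :=
                Finset.sum_congr rfl fun v hv => by rw [e2 v (by simpa using hv)]
      _ = ∑ v ∈ B.toFinite.toFinset, ∫ x in T ⁻¹' {v}, f x ∂μ :=
          Finset.sum_congr rfl fun v _ => hterm v
      _ = ∫ x in T ⁻¹' B, f x ∂μ := by
          rw [hsplit]
          refine (integral_biUnion_finset _ (fun v _ => hT (measurableSet_singleton v)) ?_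
            (fun v _ => hf.integrableOn)).symm
          intro x _ y _ hxy
          simp only [Set.disjoint_left, Set.mem_preimage, Set.mem_singleton_iff]
          rintro a rfl; exact hxy
  · exact ((Measurable.of_discrete (f := h)).comp
      (measurable_iff_comap_le.mpr le_rfl)).stronglyMeasurable.aestronglyMeasurable

lemma integral_mul_condexp' {Ω : Type*} {m m0 : MeasurableSpace Ω} (hm : m ≤ m0)
    (μ : Measure Ω) [IsProbabilityMeasure μ] {f g : Ω → ℝ}
    (hf : StronglyMeasurable[m] f) (hfg : Integrable (fun x => f x * g x) μ)
    (hg : Integrable g μ) :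
    ∫ x, f x * (μ[g|m]) x ∂μ = ∫ x, f x * g x ∂μ := by
  haveI : SigmaFinite (μ.trim hm) := inferInstance
  have h := condExp_mul_of_stronglyMeasurable_left hf hfg hg
  calc ∫ x, f x * (μ[g|m]) x ∂μ = ∫ x, (μ[fun x => f x * g x|m]) x ∂μ :=
        (integral_congr_ae h).symm
    _ = ∫ x, f x * g x ∂μ := integral_condExp hm

/-- Lemma C.6, first assertion: for each group `m` and every function `q` of `X_{-𝒳(m)}`,
almost surely `|E q(X_{-𝒳(m)}) - E( q(X_{-𝒳(m)}) | X_{𝒳(m)} )|` is at most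
`δ₀ E|q(X_{-𝒳(m)})|` divided by `min_{m', l ∈ 𝒳(m'), a ∈ {0,1}} P(X_l = a)`. -/
theorem lemma_C6_first
    {Ω : Type*} [MeasurableSpace Ω] (μ : Measure Ω) [IsProbabilityMeasure μ]
    (p M : ℕ) (hM : 2 ≤ M)
    (X : Ω → Fin p → Bool) (hX : Measurable X)
    (G : Fin M → Finset (Fin p))
    (hdisj : ∀ l k : Fin M, l ≠ k → Disjoint (G l) (G k))
    (hcover : Finset.univ.biUnion G = (Finset.univ : Finset (Fin p)))
    (honehot : ∀ᵐ ω ∂μ, ∀ m : Fin M, 1 < (G m).card →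
        ((G m).filter (fun j => X ω j = true)).card = 1)
    (δ₀ : ℝ) (hδ₀_nonneg : 0 ≤ δ₀)
    (hδ₀ : ∀ m : Fin M, ∀ i ∈ G m, ∀ᵐ ω ∂μ,
        |condProbOne μ X G m i ω - (μ {ω | X ω i = true}).toReal| ≤ δ₀)
    (pm1 : ℝ) (hpm1_pos : 0 < pm1)
    (hpm1 : ∀ m : Fin M, ∀ l ∈ G m, ∀ a : Bool, pm1 ≤ (μ {ω | X ω l = a}).toReal)
    (m : Fin M) (q : ({x // x ∈ gsetCompl G {m}} → Bool) → ℝ)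
    (hq : Integrable (fun ω => q (fun i => X ω i.1)) μ) :
    ∀ᵐ ω ∂μ,
      |(∫ ω', q (fun i => X ω' i.1) ∂μ) -
          (μ[fun ω' => q (fun i => X ω' i.1) | coordSigma X (gset G {m})]) ω| ≤
        δ₀ * (∫ ω', |q (fun i => X ω' i.1)| ∂μ) / pm1 := by
  classical
  set q' : Ω → ℝ := fun ω => q (fun i => X ω i.1) with hq'def
  obtain ⟨C, hC⟩ : ∃ C, ∀ v, |q v| ≤ C := Finite.exists_le _
  set T : Ω → ({x // x ∈ gset G {m}} → Bool) := fun ω => fun i => X ω i.1 with hTdef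
  have hT : Measurable T := measurable_pi_lambda _ fun i => (measurable_pi_apply i.1).comp hX
  have hg := condexp_comap_discrete μ T hT hq
  have hmemS : ∀ j, j ∈ gset G {m} ↔ j ∈ G m := by
    intro j; simp [gset]
  have hRHS_nonneg : 0 ≤ δ₀ * (∫ x, |q' x| ∂μ) / pm1 :=
    div_nonneg (mul_nonneg hδ₀_nonneg (integral_nonneg fun x => abs_nonneg _)) hpm1_pos.le
  -- key estimate
  have key : ∀ i ∈ G m, ∀ a : Bool,
      |(∫ x, q' x ∂μ) - (∫ x in {ω' | X ω' i = a}, q' x ∂μ) / (μ {ω' | X ω' i = a}).toReal|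
        ≤ δ₀ * (∫ x, |q' x| ∂μ) / pm1 := by
    intro i hi a
    set A : Set Ω := {ω' | X ω' i = true} with hA
    have hAm : MeasurableSet A := ((measurable_pi_apply i).comp hX) (measurableSet_singleton true)
    have hScm : coordSigma X (gsetCompl G {m}) ≤ ‹MeasurableSpace Ω› :=
      (measurable_pi_lambda _ fun j => (measurable_pi_apply (j : {x // x ∈ gsetCompl G {m}}).1)
        |>.comp hX).comap_le
    have hq'sm : StronglyMeasurable[coordSigma X (gsetCompl G {m})] q' :=
      ((Measurable.of_discrete (f := q)).comp
        (measurable_iff_comap_le.mpr le_rfl)).stronglyMeasurable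
    have hf_eq : ∀ x, q' x * (if X x i then (1:ℝ) else 0) = A.indicator q' x := by
      intro x; by_cases hx : X x i <;> simp [hA, hx, Set.indicator]
    have h1 : ∫ x in A, q' x ∂μ = ∫ x, q' x * (if X x i then (1:ℝ) else 0) ∂μ := by
      rw [← integral_indicator hAm]
      exact integral_congr_ae (Filter.Eventually.of_forall fun x => (hf_eq x).symm)
    have hf_int : Integrable (fun x => if X x i then (1:ℝ) else 0) μ := by
      have he : (fun x => if X x i then (1:ℝ) else 0) = A.indicator (fun _ => 1) := by
        funext x; by_cases hx : X x i <;> simp [hA, hx, Set.indicator]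
      rw [he]; exact (integrable_const 1).indicator hAm
    have hq'f_int : Integrable (fun x => q' x * (if X x i then (1:ℝ) else 0)) μ := by
      simp_rw [hf_eq]; exact hq.indicator hAm
    have h2 : ∫ x, q' x * condProbOne μ X G m i x ∂μ
        = ∫ x, q' x * (if X x i then (1:ℝ) else 0) ∂μ :=
      integral_mul_condexp' hScm μ hq'sm hq'f_int hf_int
    have hcond_int : Integrable (fun x => q' x * condProbOne μ X G m i x) μ :=
      (integrable_condExp).bdd_mul (c := C) hq.aestronglyMeasurable
        (Filter.Eventually.of_forall fun x => by simpa using hC _)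
    have h3 : |(∫ x, q' x * condProbOne μ X G m i x ∂μ) - (∫ x, q' x ∂μ) * (μ A).toReal|
        ≤ δ₀ * ∫ x, |q' x| ∂μ := by
      have hconst : (∫ x, q' x ∂μ) * (μ A).toReal = ∫ x, q' x * (μ A).toReal ∂μ := by
        rw [integral_mul_const]
      have hdiffint := hcond_int.sub (hq.mul_const ((μ A).toReal))
      have habs : |∫ x, (q' x * condProbOne μ X G m i x - q' x * (μ A).toReal) ∂μ|
          ≤ ∫ x, |q' x * condProbOne μ X G m i x - q' x * (μ A).toReal| ∂μ := by
        simpa [Real.norm_eq_abs] using MeasureTheory.norm_integral_le_integral_norm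
          (μ := μ) (fun x => q' x * condProbOne μ X G m i x - q' x * (μ A).toReal)
      have hmono : ∫ x, |q' x * condProbOne μ X G m i x - q' x * (μ A).toReal| ∂μ
          ≤ ∫ x, |q' x| * δ₀ ∂μ := by
        refine integral_mono_ae hdiffint.abs (hq.abs.mul_const _) ?_
        filter_upwards [hδ₀ m i hi] with x hx
        rw [← mul_sub, abs_mul]
        exact mul_le_mul_of_nonneg_left hx (abs_nonneg _)
      rw [hconst, ← integral_sub hcond_int (hq.mul_const _)]
      refine (habs.trans hmono).trans_eq ?_
      rw [integral_mul_const, mul_comm]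
    have htrue : |(∫ x in A, q' x ∂μ) - (∫ x, q' x ∂μ) * (μ A).toReal|
        ≤ δ₀ * ∫ x, |q' x| ∂μ := by rw [h1, ← h2]; exact h3
    -- numerator estimate for both values of a
    have hnum : |(∫ x in {ω' | X ω' i = a}, q' x ∂μ)
        - (∫ x, q' x ∂μ) * (μ {ω' | X ω' i = a}).toReal| ≤ δ₀ * ∫ x, |q' x| ∂μ := by
      cases a
      · -- a = false
        have hcompl : {ω' | X ω' i = false} = Aᶜ := by
          ext x; simp [hA]
        have hsum := integral_add_compl hAm hq
        have hμc : (μ Aᶜ).toReal = 1 - (μ A).toReal := by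
          rw [measure_compl hAm (measure_ne_top μ A), measure_univ,
            ENNReal.toReal_sub_of_le prob_le_one ENNReal.one_ne_top, ENNReal.toReal_one]
        rw [hcompl, hμc]
        have : (∫ x in Aᶜ, q' x ∂μ) = (∫ x, q' x ∂μ) - ∫ x in A, q' x ∂μ := by
          linarith [hsum]
        rw [this]
        calc |(∫ x, q' x ∂μ) - (∫ x in A, q' x ∂μ) - (∫ x, q' x ∂μ) * (1 - (μ A).toReal)|
            = |(∫ x in A, q' x ∂μ) - (∫ x, q' x ∂μ) * (μ A).toReal| := by
              rw [← abs_neg]; ring_nf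
          _ ≤ δ₀ * ∫ x, |q' x| ∂μ := htrue
      · exact htrue
    have hP : pm1 ≤ (μ {ω' | X ω' i = a}).toReal := hpm1 m i hi a
    have hPpos : 0 < (μ {ω' | X ω' i = a}).toReal := lt_of_lt_of_le hpm1_pos hP
    have hdiff : (∫ x, q' x ∂μ) - (∫ x in {ω' | X ω' i = a}, q' x ∂μ)
          / (μ {ω' | X ω' i = a}).toReal
        = ((∫ x, q' x ∂μ) * (μ {ω' | X ω' i = a}).toReal - ∫ x in {ω' | X ω' i = a}, q' x ∂μ)
          / (μ {ω' | X ω' i = a}).toReal := by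
      field_simp
    rw [hdiff, abs_div, abs_of_pos hPpos]
    exact div_le_div₀ (mul_nonneg hδ₀_nonneg (integral_nonneg fun x => abs_nonneg _))
      (by rw [abs_sub_comm]; exact hnum) hpm1_pos hP
  -- characterization helper
  have hchar : ∀ (ω₀ : Ω) (i : Fin p), (G m).filter (fun j => X ω₀ j = true) = {i} →
      ∀ j ∈ G m, (X ω₀ j = true ↔ j = i) := by
    intro ω₀ i hf j hj
    constructor
    · intro h
      have : j ∈ (G m).filter (fun j => X ω₀ j = true) := Finset.mem_filter.mpr ⟨hj, h⟩
      rw [hf] at this; exact Finset.mem_singleton.mp this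
    · rintro rfl
      have : j ∈ (G m).filter (fun j => X ω₀ j = true) := hf ▸ Finset.mem_singleton_self j
      exact (Finset.mem_filter.mp this).2
  filter_upwards [honehot, hg] with ω hω hgω
  have hgoal : (μ[fun ω' => q (fun i => X ω' i.1) | coordSigma X (gset G {m})]) ω
      = (∫ x in T ⁻¹' {T ω}, q' x ∂μ) / (μ (T ⁻¹' {T ω})).toReal := hgω.symm
  rw [hgoal]
  rcases Nat.lt_or_ge 1 (G m).card with hcard | hcard
  · -- one-hot case
    obtain ⟨i, hifilter⟩ := Finset.card_eq_one.mp (hω m hcard)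
    have hmemi : i ∈ (G m).filter (fun j => X ω j = true) :=
      hifilter ▸ Finset.mem_singleton_self i
    have hiG : i ∈ G m := (Finset.mem_filter.mp hmemi).1
    have hiX : X ω i = true := (Finset.mem_filter.mp hmemi).2
    have hsetae : (T ⁻¹' {T ω}) =ᵐ[μ] {ω' | X ω' i = true} := by
      rw [Filter.eventuallyEq_set]
      filter_upwards [honehot] with ω' hω'
      simp only [Set.mem_preimage, Set.mem_singleton_iff, Set.mem_setOf_eq]
      constructor
      · intro hT'
        have := congrFun hT' ⟨i, (hmemS i).mpr hiG⟩
        simp only [hTdef] at this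
        rw [this, hiX]
      · intro hX'
        obtain ⟨j', hj'⟩ := Finset.card_eq_one.mp (hω' m hcard)
        have hij' : i = j' := by
          have : i ∈ (G m).filter (fun j => X ω' j = true) := Finset.mem_filter.mpr ⟨hiG, hX'⟩
          rw [hj'] at this; exact Finset.mem_singleton.mp this
        rw [← hij'] at hj'
        funext jj
        have hjG : jj.1 ∈ G m := (hmemS jj.1).mp jj.2
        show X ω' jj.1 = X ω jj.1
        have hiff := (hchar ω' i hj' jj.1 hjG).trans (hchar ω i hifilter jj.1 hjG).symm
        cases hb : X ω' jj.1 with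
        | true => exact (hiff.mp hb).symm
        | false =>
          cases hb2 : X ω jj.1 with
          | true => rw [hiff.mpr hb2] at hb; exact absurd hb (by simp)
          | false => rfl
    rw [setIntegral_congr_set hsetae, measure_congr hsetae]
    exact key i hiG true
  · -- small group cases
    interval_cases hc : (G m).card
    · -- card = 0
      have hGm : G m = ∅ := Finset.card_eq_zero.mp hc
      have hTconst : T ⁻¹' {T ω} = Set.univ := by
        ext ω'
        simp only [Set.mem_preimage, Set.mem_singleton_iff, Set.mem_univ, iff_true]
        funext jj
        exact absurd ((hmemS jj.1).mp jj.2) (by rw [hGm]; exact Finset.notMem_empty _)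
      rw [hTconst]
      simp only [Measure.restrict_univ, measure_univ, ENNReal.toReal_one, div_one, sub_self,
        abs_zero]
      exact hRHS_nonneg
    · -- card = 1
      obtain ⟨i, hGm⟩ := Finset.card_eq_one.mp hc
      have hiG : i ∈ G m := by rw [hGm]; exact Finset.mem_singleton_self i
      have hset : T ⁻¹' {T ω} = {ω' | X ω' i = X ω i} := by
        ext ω'
        simp only [Set.mem_preimage, Set.mem_singleton_iff, Set.mem_setOf_eq]
        constructor
        · intro hT'
          have := congrFun hT' ⟨i, (hmemS i).mpr hiG⟩
          simpa only [hTdef] using this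
        · intro hX'
          funext jj
          have hjG : jj.1 ∈ G m := (hmemS jj.1).mp jj.2
          rw [hGm, Finset.mem_singleton] at hjG
          show X ω' jj.1 = X ω jj.1
          rw [hjG]; exact hX'
      rw [hset]
      exact key i hiG (X ω i)

end CT9
end
end

section
/- Lemma (C.6, third assertion). For every pair {l, k} ⊂ {1,…,M} and every measurable function q : ℝ^{p − #(𝒳(k)∪𝒳(l))} → ℝ with E|q(X_{−(𝒳(k)∪𝒳(l))})| < ∞, it holds almost surely that | E( q(X_{−(𝒳(k)∪𝒳(l))}) | X_{𝒳(k)}, X_{𝒳(l)} ) − E q(X_{−(𝒳(k)∪𝒳(l))}) | ≤ 3 δ₀ E|q(X_{−(𝒳(k)∪𝒳(l))})| / p_min, provided p_min > 0. -/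
open MeasureTheory ProbabilityTheory

noncomputable section

namespace CT11

/-- The sub-σ-algebra of `Ω` generated by the coordinates of `X` lying in `S`. -/
def coordSigma {Ω : Type*} [MeasurableSpace Ω] {p : ℕ} (X : Ω → Fin p → Bool)
    (S : Finset (Fin p)) : MeasurableSpace Ω :=
  MeasurableSpace.comap (fun ω => fun i : {x // x ∈ S} => X ω i.1) inferInstance

/-- `𝒳(J)`, the union of the feature groups indexed by `J`. -/
def gset {p M : ℕ} (G : Fin M → Finset (Fin p)) (J : Finset (Fin M)) : Finset (Fin p) :=
  J.biUnion G

/-- `{1,…,p} \ 𝒳(J)` as a finset. -/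
def gsetCompl {p M : ℕ} (G : Fin M → Finset (Fin p)) (J : Finset (Fin M)) :
    Finset (Fin p) :=
  (J.biUnion G)ᶜ

/-- The conditional probability `P(X_i = 1 | X_{-𝒳(m)})` as a random variable. -/
def condProbOne {Ω : Type*} [MeasurableSpace Ω] {p M : ℕ} (μ : Measure Ω)
    (X : Ω → Fin p → Bool) (G : Fin M → Finset (Fin p)) (m : Fin M) (i : Fin p) : Ω → ℝ :=
  μ[(fun ω => if X ω i then (1 : ℝ) else 0) | coordSigma X (gsetCompl G {m})]

section AuxLemmas

variable {Ω : Type*} [MeasurableSpace Ω] {p : ℕ} {X : Ω → Fin p → Bool}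

/-- The map collecting the coordinates of `X` lying in `S`. -/
abbrev coordMap (X : Ω → Fin p → Bool) (S : Finset (Fin p)) : Ω → ({x // x ∈ S} → Bool) :=
  fun ω => fun i : {x // x ∈ S} => X ω i.1

lemma allMeasurable {S : Finset (Fin p)} (T : Set ({x // x ∈ S} → Bool)) : MeasurableSet T :=
  (Set.toFinite T).measurableSet

lemma measurable_coordMap (hX : Measurable X) (S : Finset (Fin p)) :
    Measurable (coordMap X S) :=
  measurable_pi_lambda _ fun i => (measurable_pi_apply i.1).comp hX

lemma coordSigma_le (hX : Measurable X) (S : Finset (Fin p)) :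
    coordSigma X S ≤ ‹MeasurableSpace Ω› :=
  (measurable_coordMap hX S).comap_le

lemma measurableSet_coordSigma {S : Finset (Fin p)} (T : Set ({x // x ∈ S} → Bool)) :
    MeasurableSet[coordSigma X S] ((coordMap X S) ⁻¹' T) :=
  MeasurableSpace.measurableSet_comap.mpr ⟨T, allMeasurable T, rfl⟩

lemma coordSigma_mono {S T : Finset (Fin p)} (hST : S ⊆ T) :
    coordSigma X S ≤ coordSigma X T := by
  intro s hs
  obtain ⟨u, -, rfl⟩ := MeasurableSpace.measurableSet_comap.mp hs
  have h : coordMap X S = (fun g (i : {x // x ∈ S}) => g ⟨i.1, hST i.2⟩) ∘ coordMap X T := rfl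
  show MeasurableSet[coordSigma X T] (coordMap X S ⁻¹' u)
  rw [h, Set.preimage_comp]
  exact measurableSet_coordSigma _

lemma coordEvent_mem {S : Finset (Fin p)} {i : Fin p} (hi : i ∈ S) (a : Bool) :
    MeasurableSet[coordSigma X S] {ω | X ω i = a} := by
  have h : {ω | X ω i = a} = (coordMap X S) ⁻¹' {g | g ⟨i, hi⟩ = a} := rfl
  rw [h]
  exact measurableSet_coordSigma _

/-- Key single-coordinate estimate:  for an event `F` determined by the coordinates
outside the group `G m`, `|P(F ∩ {Xᵢ = a}) - P(Xᵢ = a) P(F)| ≤ δ₀ P(F)`. -/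
lemma auxA {M : ℕ} (μ : Measure Ω) [IsProbabilityMeasure μ]
    (hX : Measurable X) {G : Fin M → Finset (Fin p)}
    {δ₀ : ℝ} {m : Fin M} {i : Fin p}
    (hbd : ∀ᵐ ω ∂μ, |condProbOne μ X G m i ω - (μ {ω | X ω i = true}).toReal| ≤ δ₀)
    (a : Bool) {F : Set Ω} (hF : MeasurableSet[coordSigma X (gsetCompl G {m})] F) :
    |(μ (F ∩ {ω | X ω i = a})).toReal -
        (μ {ω | X ω i = a}).toReal * (μ F).toReal| ≤ δ₀ * (μ F).toReal := by
  have hm' : coordSigma X (gsetCompl G {m}) ≤ ‹MeasurableSpace Ω› := coordSigma_le hX _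
  have hFΩ : MeasurableSet F := hm' _ hF
  have hEt : MeasurableSet {ω | X ω i = true} :=
    ((measurable_pi_apply i).comp hX) (measurableSet_singleton true)
  have hE : MeasurableSet {ω | X ω i = a} :=
    ((measurable_pi_apply i).comp hX) (measurableSet_singleton a)
  set Et : Set Ω := {ω | X ω i = true} with hEtdef
  set E : Set Ω := {ω | X ω i = a} with hEdef
  set indT : Ω → ℝ := Et.indicator (fun _ => 1) with hindT
  set ind : Ω → ℝ := E.indicator (fun _ => 1) with hind
  have hintT : Integrable indT μ := (integrable_const (1 : ℝ)).indicator hEt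
  have hint : Integrable ind μ := (integrable_const (1 : ℝ)).indicator hE
  have hcondT : condProbOne μ X G m i = μ[indT | coordSigma X (gsetCompl G {m})] := by
    have hfeq : (fun ω => if X ω i then (1 : ℝ) else 0) = indT := by
      funext ω
      by_cases h : X ω i = true <;> simp [hindT, Set.indicator_apply, hEtdef, h]
    rw [condProbOne, hfeq]
  have hbdT : ∀ᵐ ω ∂μ,
      |(μ[indT | coordSigma X (gsetCompl G {m})]) ω - (μ Et).toReal| ≤ δ₀ := by
    rw [← hcondT]; exact hbd
  have hπbd : ∀ᵐ ω ∂μ,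
      |(μ[ind | coordSigma X (gsetCompl G {m})]) ω - (μ E).toReal| ≤ δ₀ := by
    cases a with
    | true => exact hbdT
    | false =>
      have hEc : E = Etᶜ := by
        ext ω; simp [hEdef, hEtdef]
      have hfun : ind = (fun _ => (1 : ℝ)) - indT := by
        funext ω
        by_cases h : X ω i = true <;>
          simp [hind, hindT, Set.indicator_apply, hEdef, hEtdef, hEc, h]
      have hsub := condExp_sub (μ := μ) (m := coordSigma X (gsetCompl G {m}))
        (integrable_const (1 : ℝ)) hintT
      have hconst := condExp_const (μ := μ) hm' (1 : ℝ)
      have hμE : (μ E).toReal = 1 - (μ Et).toReal := by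
        rw [hEc, measure_compl hEt (measure_ne_top μ _), measure_univ,
          ENNReal.toReal_sub_of_le prob_le_one ENNReal.one_ne_top, ENNReal.toReal_one]
      rw [hfun]
      filter_upwards [hbdT, hsub] with ω h1 h2
      rw [h2]
      simp only [Pi.sub_apply, hconst]
      rw [hμE]
      have heq : (1 : ℝ) - (μ[indT | coordSigma X (gsetCompl G {m})]) ω - (1 - (μ Et).toReal)
          = -((μ[indT | coordSigma X (gsetCompl G {m})]) ω - (μ Et).toReal) := by ring
      rw [heq, abs_neg]
      exact h1
  have hcalc1 : ∫ ω in F, ind ω ∂μ = (μ (F ∩ E)).toReal := by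
    rw [hind]
    rw [integral_indicator_const (1 : ℝ) hE, Measure.real, Measure.restrict_apply hE, smul_eq_mul, mul_one,
      Set.inter_comm]
  have hcalc2 : ∫ ω in F, ind ω ∂μ
      = ∫ ω in F, (μ[ind | coordSigma X (gsetCompl G {m})]) ω ∂μ :=
    (setIntegral_condExp hm' hint hF).symm
  have hsubint : ∫ ω in F, (μ[ind | coordSigma X (gsetCompl G {m})]) ω ∂μ
        - (μ E).toReal * (μ F).toReal
      = ∫ ω in F, ((μ[ind | coordSigma X (gsetCompl G {m})]) ω - (μ E).toReal) ∂μ := by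
    rw [integral_sub integrable_condExp.integrableOn
      (integrableOn_const (C := (μ E).toReal) (measure_ne_top μ F)), setIntegral_const, Measure.real, smul_eq_mul,
      mul_comm]
  have hb : ‖∫ ω in F, ((μ[ind | coordSigma X (gsetCompl G {m})]) ω - (μ E).toReal) ∂μ‖
      ≤ δ₀ * (μ F).toReal :=
    norm_setIntegral_le_of_norm_le_const_ae (measure_lt_top μ F)
      (ae_restrict_of_ae (hπbd.mono fun ω h => by simpa [Real.norm_eq_abs] using h))
  have heq : (μ (F ∩ E)).toReal - (μ E).toReal * (μ F).toReal
      = ∫ ω in F, ((μ[ind | coordSigma X (gsetCompl G {m})]) ω - (μ E).toReal) ∂μ := by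
    rw [← hsubint, ← hcalc2, hcalc1]
  rw [heq, ← Real.norm_eq_abs]
  exact hb

/-- Decomposition of a set integral of a function of the coordinates in `R`
over the finitely many values of those coordinates. -/
lemma decomp (μ : Measure Ω) [IsFiniteMeasure μ] (hX : Measurable X)
    (R : Finset (Fin p)) (r : ({x // x ∈ R} → Bool) → ℝ) {S : Set Ω} (_hS : MeasurableSet S) :
    ∫ ω in S, r (coordMap X R ω) ∂μ =
      ∑ z : {x // x ∈ R} → Bool, r z * (μ ((coordMap X R) ⁻¹' {z} ∩ S)).toReal := by
  have hmeas : ∀ z : {x // x ∈ R} → Bool, MeasurableSet ((coordMap X R) ⁻¹' {z}) :=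
    fun z => measurable_coordMap hX R (measurableSet_singleton z)
  have hpt : ∀ ω, r (coordMap X R ω)
      = ∑ z : {x // x ∈ R} → Bool, ((coordMap X R) ⁻¹' {z}).indicator (fun _ => r z) ω := by
    intro ω
    rw [Finset.sum_eq_single (coordMap X R ω)]
    · simp [Set.indicator_apply]
    · intro z _ hz
      simp [Set.indicator_apply, Ne.symm hz]
    · simp
  calc ∫ ω in S, r (coordMap X R ω) ∂μ
      = ∫ ω in S, ∑ z : {x // x ∈ R} → Bool,
          ((coordMap X R) ⁻¹' {z}).indicator (fun _ => r z) ω ∂μ :=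
        integral_congr_ae (Filter.Eventually.of_forall fun ω => hpt ω)
    _ = ∑ z : {x // x ∈ R} → Bool,
          ∫ ω in S, ((coordMap X R) ⁻¹' {z}).indicator (fun _ => r z) ω ∂μ :=
        integral_finset_sum _ fun z _ =>
          ((integrable_const (r z)).indicator (hmeas z)).integrableOn
    _ = ∑ z : {x // x ∈ R} → Bool, r z * (μ ((coordMap X R) ⁻¹' {z} ∩ S)).toReal := by
        refine Finset.sum_congr rfl fun z _ => ?_
        rw [integral_indicator_const _ (hmeas z), Measure.real, Measure.restrict_apply (hmeas z),
          smul_eq_mul, mul_comm]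

/-- For a nonempty group, the atom of the coordinates in the group containing a
one-hot point `ω` is a.e. equal to a single-coordinate event. -/
lemma grpRep {M : ℕ} (μ : Measure Ω) {G : Fin M → Finset (Fin p)}
    (honehot : ∀ᵐ ω ∂μ, ∀ m : Fin M, 1 < (G m).card →
        ((G m).filter (fun j => X ω j = true)).card = 1)
    (m : Fin M) (hne : (G m).Nonempty) (ω : Ω)
    (hω : ∀ m' : Fin M, 1 < (G m').card → ((G m').filter (fun j => X ω j = true)).card = 1) :
    ∃ i₀, i₀ ∈ G m ∧ ∃ a₀ : Bool,
      ((coordMap X (G m)) ⁻¹' {coordMap X (G m) ω} : Set Ω) =ᵐ[μ] {ω' | X ω' i₀ = a₀} := by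
  rcases lt_or_ge 1 (G m).card with hcard | hcard
  · obtain ⟨i₀, hfil⟩ := Finset.card_eq_one.mp (hω m hcard)
    have hi₀mem : i₀ ∈ (G m).filter (fun j => X ω j = true) := by
      rw [hfil]; exact Finset.mem_singleton_self i₀
    have hi₀G : i₀ ∈ G m := (Finset.mem_filter.mp hi₀mem).1
    have hXω : X ω i₀ = true := (Finset.mem_filter.mp hi₀mem).2
    refine ⟨i₀, hi₀G, true, ?_⟩
    filter_upwards [honehot] with ω' hω'
    show (ω' ∈ (coordMap X (G m)) ⁻¹' {coordMap X (G m) ω}) = (ω' ∈ {ω'' | X ω'' i₀ = true})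
    simp only [Set.mem_preimage, Set.mem_singleton_iff, Set.mem_setOf_eq]
    apply propext
    constructor
    · intro h
      have h2 : X ω' i₀ = X ω i₀ := congrFun h ⟨i₀, hi₀G⟩
      rw [h2, hXω]
    · intro h
      obtain ⟨i₁, hfil'⟩ := Finset.card_eq_one.mp (hω' m hcard)
      have hi₀mem' : i₀ ∈ (G m).filter (fun j => X ω' j = true) :=
        Finset.mem_filter.mpr ⟨hi₀G, h⟩
      have hii : i₁ = i₀ := by
        rw [hfil'] at hi₀mem'; exact (Finset.mem_singleton.mp hi₀mem').symm
      rw [hii] at hfil'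
      funext i
      show X ω' i.1 = X ω i.1
      by_cases hcase : i.1 = i₀
      · rw [hcase, h, hXω]
      · have hf1 : X ω' i.1 = false := by
          cases hb : X ω' i.1
          · rfl
          · exfalso
            have hmem : i.1 ∈ (G m).filter (fun j => X ω' j = true) :=
              Finset.mem_filter.mpr ⟨i.2, hb⟩
            rw [hfil'] at hmem
            exact hcase (Finset.mem_singleton.mp hmem)
        have hf2 : X ω i.1 = false := by
          cases hb : X ω i.1
          · rfl
          · exfalso
            have hmem : i.1 ∈ (G m).filter (fun j => X ω j = true) :=
              Finset.mem_filter.mpr ⟨i.2, hb⟩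
            rw [hfil] at hmem
            exact hcase (Finset.mem_singleton.mp hmem)
        rw [hf1, hf2]
  · have hc1 : (G m).card = 1 := le_antisymm hcard hne.card_pos
    obtain ⟨i₀, hGm⟩ := Finset.card_eq_one.mp hc1
    have hi₀G : i₀ ∈ G m := by rw [hGm]; exact Finset.mem_singleton_self i₀
    refine ⟨i₀, hi₀G, X ω i₀, ?_⟩
    have hset : (coordMap X (G m)) ⁻¹' {coordMap X (G m) ω} = {ω' | X ω' i₀ = X ω i₀} := by
      ext ω'
      simp only [Set.mem_preimage, Set.mem_singleton_iff, Set.mem_setOf_eq]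
      constructor
      · intro h; exact congrFun h ⟨i₀, hi₀G⟩
      · intro h; funext i
        have h2 : (i : Fin p) ∈ ({i₀} : Finset (Fin p)) := hGm ▸ i.2
        have hii : (i : Fin p) = i₀ := Finset.mem_singleton.mp h2
        show X ω' i.1 = X ω i.1
        rw [hii]; exact h
    rw [hset]; exact Filter.EventuallyEq.rfl

end AuxLemmas

/-- Lemma C.6, third assertion: for groups `l ≠ k` and every function `q` of
`X_{-(𝒳(k) ∪ 𝒳(l))}`, almost surely
`|E( q | X_{𝒳(k)}, X_{𝒳(l)} ) - E q| ≤ 3 δ₀ E|q| / p_min`. -/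
theorem lemma_C6_third
    {Ω : Type*} [MeasurableSpace Ω] (μ : Measure Ω) [IsProbabilityMeasure μ]
    (p M : ℕ) (hM : 2 ≤ M)
    (X : Ω → Fin p → Bool) (hX : Measurable X)
    (G : Fin M → Finset (Fin p))
    (hdisj : ∀ l k : Fin M, l ≠ k → Disjoint (G l) (G k))
    (hcover : Finset.univ.biUnion G = (Finset.univ : Finset (Fin p)))
    (honehot : ∀ᵐ ω ∂μ, ∀ m : Fin M, 1 < (G m).card →
        ((G m).filter (fun j => X ω j = true)).card = 1)
    (δ₀ : ℝ) (hδ₀_nonneg : 0 ≤ δ₀)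
    (hδ₀ : ∀ m : Fin M, ∀ i ∈ G m, ∀ᵐ ω ∂μ,
        |condProbOne μ X G m i ω - (μ {ω | X ω i = true}).toReal| ≤ δ₀)
    (pmin : ℝ) (hpmin_pos : 0 < pmin)
    (hpmin : ∀ l k : Fin M, l ≠ k → ∀ i ∈ G l, ∀ j ∈ G k, ∀ a b : Bool,
        pmin ≤ (μ {ω | X ω i = a ∧ X ω j = b}).toReal)
    (l k : Fin M) (hlk : l ≠ k)
    (q : ({x // x ∈ gsetCompl G {k, l}} → Bool) → ℝ)
    (hq : Integrable (fun ω => q (fun i => X ω i.1)) μ) :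
    ∀ᵐ ω ∂μ,
      |(μ[fun ω' => q (fun i => X ω' i.1) | coordSigma X (G k ∪ G l)]) ω -
          ∫ ω', q (fun i => X ω' i.1) ∂μ| ≤
        3 * δ₀ * (∫ ω', |q (fun i => X ω' i.1)| ∂μ) / pmin := by
  classical
  have hm : coordSigma X (G k ∪ G l) ≤ ‹MeasurableSpace Ω› := coordSigma_le hX _
  set A : Finset (Fin p) := G k ∪ G l with hAdef
  have hkl : ({k, l} : Finset (Fin M)).biUnion G = G k ∪ G l := by
    rw [show ({k, l} : Finset (Fin M)) = insert k {l} from rfl, Finset.biUnion_insert,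
      Finset.singleton_biUnion]
  have hRA : gsetCompl G {k, l} = Aᶜ := by rw [hAdef, gsetCompl, hkl]
  have hGsk : gsetCompl G {k} = (G k)ᶜ := by rw [gsetCompl, Finset.singleton_biUnion]
  have hGsl : gsetCompl G {l} = (G l)ᶜ := by rw [gsetCompl, Finset.singleton_biUnion]
  have hRk : (gsetCompl G {k, l}) ⊆ gsetCompl G {k} := by
    rw [hRA, hGsk]
    intro x hx
    rw [Finset.mem_compl] at hx ⊢
    exact fun h => hx (by rw [hAdef]; exact Finset.mem_union_left _ h)
  have hRl : (gsetCompl G {k, l}) ⊆ gsetCompl G {l} := by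
    rw [hRA, hGsl]
    intro x hx
    rw [Finset.mem_compl] at hx ⊢
    exact fun h => hx (by rw [hAdef]; exact Finset.mem_union_right _ h)
  set f : Ω → ℝ := fun ω => q (fun i => X ω i.1) with hfdef
  set g : Ω → ℝ := μ[f | coordSigma X A] with hgdef
  have hqf : Integrable f μ := by first | exact hq | (rw [hfdef]; exact hq)
  -- the set of points whose atom is null is null
  have hbad : μ {ω | μ (coordMap X A ⁻¹' {coordMap X A ω}) = 0} = 0 := by
    have hsub : {ω | μ (coordMap X A ⁻¹' {coordMap X A ω}) = 0}
        ⊆ ⋃ v ∈ {v : {x // x ∈ A} → Bool | μ (coordMap X A ⁻¹' {v}) = 0},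
            coordMap X A ⁻¹' {v} := by
      intro ω hω
      exact Set.mem_biUnion hω rfl
    refine measure_mono_null hsub ?_
    rw [measure_biUnion_null_iff (Set.to_countable _)]
    exact fun v hv => hv
  have hgood : ∀ᵐ ω ∂μ, μ (coordMap X A ⁻¹' {coordMap X A ω}) ≠ 0 := by
    rw [ae_iff]
    simpa using hbad
  -- g is constant on atoms
  have hgsm : Measurable[coordSigma X A] g := by
    rw [hgdef]; exact stronglyMeasurable_condExp.measurable
  have hconst : ∀ ω ω', coordMap X A ω' = coordMap X A ω → g ω' = g ω := by
    intro ω ω' h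
    have hms : MeasurableSet[MeasurableSpace.comap (coordMap X A) inferInstance]
        (g ⁻¹' {g ω}) := hgsm (measurableSet_singleton (g ω))
    obtain ⟨T, -, hT⟩ := MeasurableSpace.measurableSet_comap.mp hms
    have hω : ω ∈ coordMap X A ⁻¹' T := by rw [hT]; exact rfl
    have hω' : ω' ∈ coordMap X A ⁻¹' T := by
      rw [Set.mem_preimage] at hω ⊢; rw [h]; exact hω
    rw [hT] at hω'
    exact hω'
  -- overall integrals
  have hIf : ∫ ω', f ω' ∂μ
      = ∑ z : {x // x ∈ (gsetCompl G {k, l})} → Bool, q z * (μ (coordMap X (gsetCompl G {k, l}) ⁻¹' {z})).toReal := by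
    have h := decomp μ hX (gsetCompl G {k, l}) q MeasurableSet.univ
    rw [Measure.restrict_univ] at h
    simp only [Set.inter_univ] at h
    rw [hfdef]
    exact h
  have hIabs : ∫ ω', |f ω'| ∂μ
      = ∑ z : {x // x ∈ (gsetCompl G {k, l})} → Bool, |q z| * (μ (coordMap X (gsetCompl G {k, l}) ⁻¹' {z})).toReal := by
    have h := decomp μ hX (gsetCompl G {k, l}) (fun v => |q v|) MeasurableSet.univ
    rw [Measure.restrict_univ] at h
    simp only [Set.inter_univ] at h
    rw [hfdef]
    exact h
  filter_upwards [honehot, hgood] with ω hoh hatompos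
  set atom : Set Ω := coordMap X A ⁻¹' {coordMap X A ω} with hatomdef
  have hatomσ : MeasurableSet[coordSigma X A] atom := measurableSet_coordSigma _
  have hatomΩ : MeasurableSet atom := hm _ hatomσ
  have hμa_pos : 0 < (μ atom).toReal := ENNReal.toReal_pos hatompos (measure_ne_top μ _)
  have hgatom : g ω * (μ atom).toReal = ∫ ω' in atom, f ω' ∂μ := by
    have h1 : ∫ ω' in atom, g ω' ∂μ = ∫ ω' in atom, f ω' ∂μ := by
      rw [hgdef]; exact setIntegral_condExp hm hqf hatomσ
    have h2 : ∫ ω' in atom, g ω' ∂μ = g ω * (μ atom).toReal := by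
      rw [setIntegral_congr_fun hatomΩ (fun ω' hω' => hconst ω ω' hω'), setIntegral_const, Measure.real,
        smul_eq_mul, mul_comm]
    rw [← h2, h1]
  have hatomInt : ∫ ω' in atom, f ω' ∂μ
      = ∑ z : {x // x ∈ (gsetCompl G {k, l})} → Bool, q z * (μ (coordMap X (gsetCompl G {k, l}) ⁻¹' {z} ∩ atom)).toReal := by
    rw [hfdef]
    exact decomp μ hX (gsetCompl G {k, l}) q hatomΩ
  -- the key per-value estimate
  have key : ∀ z : {x // x ∈ (gsetCompl G {k, l})} → Bool,
      |(μ (coordMap X (gsetCompl G {k, l}) ⁻¹' {z} ∩ atom)).toReal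
          - (μ (coordMap X (gsetCompl G {k, l}) ⁻¹' {z})).toReal * (μ atom).toReal|
        ≤ 3 * δ₀ / pmin * ((μ (coordMap X (gsetCompl G {k, l}) ⁻¹' {z})).toReal * (μ atom).toReal) := by
    intro z
    set B : Set Ω := coordMap X (gsetCompl G {k, l}) ⁻¹' {z} with hBdef
    have hBk : MeasurableSet[coordSigma X (gsetCompl G {k})] B :=
      coordSigma_mono hRk _ (measurableSet_coordSigma _)
    have hBl : MeasurableSet[coordSigma X (gsetCompl G {l})] B :=
      coordSigma_mono hRl _ (measurableSet_coordSigma _)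
    have hBnn : (0 : ℝ) ≤ (μ B).toReal := ENNReal.toReal_nonneg
    have hsplit : atom = (coordMap X (G k) ⁻¹' {coordMap X (G k) ω})
        ∩ (coordMap X (G l) ⁻¹' {coordMap X (G l) ω}) := by
      ext ω'
      simp only [hatomdef, Set.mem_preimage, Set.mem_singleton_iff, Set.mem_inter_iff,
        funext_iff, Subtype.forall]
      constructor
      · intro h
        refine ⟨fun i hi => h i ?_, fun i hi => h i ?_⟩
        · rw [hAdef]; exact Finset.mem_union_left _ hi
        · rw [hAdef]; exact Finset.mem_union_right _ hi
      · rintro ⟨h1, h2⟩ i hi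
        rw [hAdef] at hi
        rcases Finset.mem_union.mp hi with hi | hi
        · exact h1 i hi
        · exact h2 i hi
    -- helper for B = univ cases
    have hBuniv : (gsetCompl G {k, l}) = ∅ → B = Set.univ := by
      intro hRe
      rw [hBdef]
      apply Set.eq_univ_of_forall
      intro ω'
      simp only [Set.mem_preimage, Set.mem_singleton_iff]
      haveI : IsEmpty {x // x ∈ gsetCompl G {k, l}} := Finset.isEmpty_coe_sort.mpr hRe
      funext i
      exact isEmptyElim i
    have huniv : ∀ (m : Fin M), G m = ∅ →
        (coordMap X (G m) ⁻¹' {coordMap X (G m) ω}) = Set.univ := by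
      intro m hGm
      apply Set.eq_univ_of_forall
      intro ω'
      simp only [Set.mem_preimage, Set.mem_singleton_iff]
      haveI : IsEmpty {x // x ∈ G m} := Finset.isEmpty_coe_sort.mpr hGm
      funext i
      exact isEmptyElim i
    have hRHSnn : (0 : ℝ) ≤ 3 * δ₀ / pmin * ((μ B).toReal * (μ atom).toReal) :=
      mul_nonneg (div_nonneg (by linarith) hpmin_pos.le)
        (mul_nonneg ENNReal.toReal_nonneg ENNReal.toReal_nonneg)
    -- case of an all-groups-covered-by-one situation: (gsetCompl G {k, l}) = ∅
    have hBunivCase : B = Set.univ →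
        |(μ (B ∩ atom)).toReal - (μ B).toReal * (μ atom).toReal|
          ≤ 3 * δ₀ / pmin * ((μ B).toReal * (μ atom).toReal) := by
      intro hBu
      rw [hBu]
      simp only [Set.univ_inter, measure_univ, ENNReal.toReal_one, one_mul, sub_self, abs_zero]
      rw [hBu] at hRHSnn
      simpa using hRHSnn
    rcases Finset.eq_empty_or_nonempty (G k) with hGk | hGk
    · rcases Finset.eq_empty_or_nonempty (G l) with hGl | hGl
      · -- both groups empty : atom = univ
        have hatomu : atom = Set.univ := by
          rw [hsplit, huniv k hGk, huniv l hGl, Set.univ_inter]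
        rw [hatomu]
        simp only [Set.inter_univ, measure_univ, ENNReal.toReal_one, mul_one, sub_self, abs_zero]
        rw [hatomu] at hRHSnn
        simpa using hRHSnn
      · -- G k empty, G l nonempty
        obtain ⟨j₀, hj₀, b₀, hLae⟩ := grpRep μ honehot l hGl ω hoh
        have hatomL : atom = coordMap X (G l) ⁻¹' {coordMap X (G l) ω} := by
          rw [hsplit, huniv k hGk, Set.univ_inter]
        have hμatom : μ atom = μ {ω' | X ω' j₀ = b₀} := by
          rw [hatomL]; exact measure_congr hLae
        have hμBatom : μ (B ∩ atom) = μ (B ∩ {ω' | X ω' j₀ = b₀}) := by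
          rw [hatomL]
          exact measure_congr (ae_eq_set_inter (Filter.EventuallyEq.refl _ _) hLae)
        have h3 := auxA μ hX (hδ₀ l j₀ hj₀) b₀ hBl
        by_cases hex : ∃ m : Fin M, m ≠ l ∧ (G m).Nonempty
        · obtain ⟨m, hml, j', hj'⟩ := hex
          have hple : pmin ≤ (μ {ω' | X ω' j₀ = b₀}).toReal := by
            refine le_trans (hpmin l m (Ne.symm hml) j₀ hj₀ j' hj' b₀ true) ?_
            refine ENNReal.toReal_mono (measure_ne_top μ _) (measure_mono ?_)
            intro x hx
            exact hx.1
          rw [hμBatom, hμatom]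
          have hLnn : (0 : ℝ) ≤ (μ {ω' | X ω' j₀ = b₀}).toReal := ENNReal.toReal_nonneg
          rw [mul_comm ((μ B).toReal) ((μ {ω' | X ω' j₀ = b₀}).toReal)]
          rw [div_mul_eq_mul_div, le_div_iff₀ hpmin_pos]
          linarith [mul_le_mul_of_nonneg_right h3 hpmin_pos.le,
            mul_le_mul_of_nonneg_left hple (mul_nonneg hδ₀_nonneg hBnn),
            mul_nonneg (mul_nonneg hδ₀_nonneg hBnn) hLnn]
        · push_neg at hex
          have hRe : (gsetCompl G {k, l}) = (∅ : Finset (Fin p)) := by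
            rw [hRA, Finset.eq_empty_iff_forall_notMem]
            intro x hx
            rw [Finset.mem_compl] at hx
            have hxu : x ∈ Finset.univ.biUnion G := by rw [hcover]; exact Finset.mem_univ x
            obtain ⟨m, -, hxm⟩ := Finset.mem_biUnion.mp hxu
            by_cases hmleq : m = l
            · subst hmleq
              exact hx (by rw [hAdef]; exact Finset.mem_union_right _ hxm)
            · rw [hex m hmleq] at hxm
              exact absurd hxm (Finset.notMem_empty _)
          exact hBunivCase (hBuniv hRe)
    · rcases Finset.eq_empty_or_nonempty (G l) with hGl | hGl
      · -- G k nonempty, G l empty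
        obtain ⟨i₀, hi₀, a₀, hKae⟩ := grpRep μ honehot k hGk ω hoh
        have hatomK : atom = coordMap X (G k) ⁻¹' {coordMap X (G k) ω} := by
          rw [hsplit, huniv l hGl, Set.inter_univ]
        have hμatom : μ atom = μ {ω' | X ω' i₀ = a₀} := by
          rw [hatomK]; exact measure_congr hKae
        have hμBatom : μ (B ∩ atom) = μ (B ∩ {ω' | X ω' i₀ = a₀}) := by
          rw [hatomK]
          exact measure_congr (ae_eq_set_inter (Filter.EventuallyEq.refl _ _) hKae)
        have h3 := auxA μ hX (hδ₀ k i₀ hi₀) a₀ hBk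
        by_cases hex : ∃ m : Fin M, m ≠ k ∧ (G m).Nonempty
        · obtain ⟨m, hmk, j', hj'⟩ := hex
          have hple : pmin ≤ (μ {ω' | X ω' i₀ = a₀}).toReal := by
            refine le_trans (hpmin k m (Ne.symm hmk) i₀ hi₀ j' hj' a₀ true) ?_
            refine ENNReal.toReal_mono (measure_ne_top μ _) (measure_mono ?_)
            intro x hx
            exact hx.1
          rw [hμBatom, hμatom]
          have hLnn : (0 : ℝ) ≤ (μ {ω' | X ω' i₀ = a₀}).toReal := ENNReal.toReal_nonneg
          rw [mul_comm ((μ B).toReal) ((μ {ω' | X ω' i₀ = a₀}).toReal)]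
          rw [div_mul_eq_mul_div, le_div_iff₀ hpmin_pos]
          linarith [mul_le_mul_of_nonneg_right h3 hpmin_pos.le,
            mul_le_mul_of_nonneg_left hple (mul_nonneg hδ₀_nonneg hBnn),
            mul_nonneg (mul_nonneg hδ₀_nonneg hBnn) hLnn]
        · push_neg at hex
          have hRe : (gsetCompl G {k, l}) = (∅ : Finset (Fin p)) := by
            rw [hRA, Finset.eq_empty_iff_forall_notMem]
            intro x hx
            rw [Finset.mem_compl] at hx
            have hxu : x ∈ Finset.univ.biUnion G := by rw [hcover]; exact Finset.mem_univ x
            obtain ⟨m, -, hxm⟩ := Finset.mem_biUnion.mp hxu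
            by_cases hmkeq : m = k
            · subst hmkeq
              exact hx (by rw [hAdef]; exact Finset.mem_union_left _ hxm)
            · rw [hex m hmkeq] at hxm
              exact absurd hxm (Finset.notMem_empty _)
          exact hBunivCase (hBuniv hRe)
      · -- main case: both groups nonempty
        obtain ⟨i₀, hi₀, a₀, hKae⟩ := grpRep μ honehot k hGk ω hoh
        obtain ⟨j₀, hj₀, b₀, hLae⟩ := grpRep μ honehot l hGl ω hoh
        set K' : Set Ω := {ω' | X ω' i₀ = a₀} with hK'def
        set L' : Set Ω := {ω' | X ω' j₀ = b₀} with hL'def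
        have hae2 : atom =ᵐ[μ] (K' ∩ L' : Set Ω) := by
          rw [hsplit]; exact ae_eq_set_inter hKae hLae
        have hμatom : μ atom = μ (L' ∩ K') := by
          rw [measure_congr hae2, Set.inter_comm]
        have hμBatom : μ (B ∩ atom) = μ ((L' ∩ B) ∩ K') := by
          have h1 : μ (B ∩ atom) = μ (B ∩ (K' ∩ L')) :=
            measure_congr (ae_eq_set_inter (Filter.EventuallyEq.refl _ _) hae2)
          rw [h1]
          congr 1
          ext x
          simp only [Set.mem_inter_iff]
          tauto
        have hj₀k : j₀ ∈ gsetCompl G {k} := by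
          rw [hGsk]
          exact Finset.mem_compl.mpr (Finset.disjoint_left.mp (hdisj l k hlk) hj₀)
        have hL'k : MeasurableSet[coordSigma X (gsetCompl G {k})] L' := coordEvent_mem hj₀k b₀
        have h1 := auxA μ hX (hδ₀ k i₀ hi₀) a₀ (hL'k.inter hBk)
        have h2 := auxA μ hX (hδ₀ k i₀ hi₀) a₀ hL'k
        have h3 := auxA μ hX (hδ₀ l j₀ hj₀) b₀ hBl
        rw [Set.inter_comm B L'] at h3
        have hp : pmin ≤ (μ (L' ∩ K')).toReal := by
          have hp0 := hpmin k l (Ne.symm hlk) i₀ hi₀ j₀ hj₀ a₀ b₀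
          have hseteq : {ω' | X ω' i₀ = a₀ ∧ X ω' j₀ = b₀} = L' ∩ K' := by
            ext x
            simp only [Set.mem_inter_iff, hK'def, hL'def, Set.mem_setOf_eq]
            tauto
          rwa [hseteq] at hp0
        -- numeric part
        have hu_w : (μ (L' ∩ B)).toReal ≤ (μ B).toReal :=
          ENNReal.toReal_mono (measure_ne_top μ _) (measure_mono Set.inter_subset_right)
        have hcK1 : (μ K').toReal ≤ 1 := by
          simpa using ENNReal.toReal_mono ENNReal.one_ne_top prob_le_one
        have hv1 : (μ L').toReal ≤ 1 := by
          simpa using ENNReal.toReal_mono ENNReal.one_ne_top prob_le_one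
        have hcK0 : (0 : ℝ) ≤ (μ K').toReal := ENNReal.toReal_nonneg
        have hv0 : (0 : ℝ) ≤ (μ L').toReal := ENNReal.toReal_nonneg
        have hu0 : (0 : ℝ) ≤ (μ (L' ∩ B)).toReal := ENNReal.toReal_nonneg
        have hP20 : (0 : ℝ) ≤ (μ (L' ∩ K')).toReal := ENNReal.toReal_nonneg
        have e1 := abs_le.mp h1
        have e2 := abs_le.mp h2
        have e3 := abs_le.mp h3
        have a1 := mul_le_mul_of_nonneg_left e3.2 hcK0
        have a2 := mul_le_mul_of_nonneg_left e3.1 hcK0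
        have b1 := mul_le_mul_of_nonneg_left e2.2 hBnn
        have b2 := mul_le_mul_of_nonneg_left e2.1 hBnn
        have c1 := mul_le_mul_of_nonneg_left hu_w hδ₀_nonneg
        have d1 := mul_le_mul_of_nonneg_right hcK1 (mul_nonneg hδ₀_nonneg hBnn)
        have f1 := mul_le_mul_of_nonneg_left
          (mul_le_mul_of_nonneg_left hv1 hδ₀_nonneg) hBnn
        have key3 : |(μ ((L' ∩ B) ∩ K')).toReal - (μ B).toReal * (μ (L' ∩ K')).toReal|
            ≤ 3 * δ₀ * (μ B).toReal := by
          rw [abs_le]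
          constructor <;> linarith [e1.1, e1.2, a1, a2, b1, b2, c1, d1, f1]
        rw [hμBatom, hμatom]
        rw [div_mul_eq_mul_div, le_div_iff₀ hpmin_pos]
        have hkey3' := mul_le_mul_of_nonneg_right key3 hpmin_pos.le
        have h3δw : (0 : ℝ) ≤ 3 * δ₀ * (μ B).toReal :=
          mul_nonneg (mul_nonneg (by norm_num) hδ₀_nonneg) hBnn
        have hstep := mul_le_mul_of_nonneg_left hp h3δw
        linarith [hkey3', hstep]
  -- assembling the sum
  have step1 : g ω * (μ atom).toReal - (∫ ω', f ω' ∂μ) * (μ atom).toReal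
      = ∑ z : {x // x ∈ (gsetCompl G {k, l})} → Bool,
          q z * ((μ (coordMap X (gsetCompl G {k, l}) ⁻¹' {z} ∩ atom)).toReal
            - (μ (coordMap X (gsetCompl G {k, l}) ⁻¹' {z})).toReal * (μ atom).toReal) := by
    rw [hgatom, hatomInt, hIf, Finset.sum_mul, ← Finset.sum_sub_distrib]
    exact Finset.sum_congr rfl fun z _ => by ring
  have step2 : |g ω * (μ atom).toReal - (∫ ω', f ω' ∂μ) * (μ atom).toReal|
      ≤ ∑ z : {x // x ∈ (gsetCompl G {k, l})} → Bool,
          |q z| * (3 * δ₀ / pmin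
            * ((μ (coordMap X (gsetCompl G {k, l}) ⁻¹' {z})).toReal * (μ atom).toReal)) := by
    rw [step1]
    refine (Finset.abs_sum_le_sum_abs _ _).trans (Finset.sum_le_sum fun z _ => ?_)
    rw [abs_mul]
    exact mul_le_mul_of_nonneg_left (key z) (abs_nonneg _)
  have step3 : ∑ z : {x // x ∈ (gsetCompl G {k, l})} → Bool,
        |q z| * (3 * δ₀ / pmin * ((μ (coordMap X (gsetCompl G {k, l}) ⁻¹' {z})).toReal * (μ atom).toReal))
      = (3 * δ₀ * (∫ ω', |f ω'| ∂μ) / pmin) * (μ atom).toReal := by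
    have hterm : ∀ z : {x // x ∈ (gsetCompl G {k, l})} → Bool,
        |q z| * (3 * δ₀ / pmin * ((μ (coordMap X (gsetCompl G {k, l}) ⁻¹' {z})).toReal * (μ atom).toReal))
          = (3 * δ₀ / pmin * (μ atom).toReal)
              * (|q z| * (μ (coordMap X (gsetCompl G {k, l}) ⁻¹' {z})).toReal) := fun z => by ring
    calc ∑ z : {x // x ∈ (gsetCompl G {k, l})} → Bool,
          |q z| * (3 * δ₀ / pmin * ((μ (coordMap X (gsetCompl G {k, l}) ⁻¹' {z})).toReal * (μ atom).toReal))
        = ∑ z : {x // x ∈ (gsetCompl G {k, l})} → Bool, (3 * δ₀ / pmin * (μ atom).toReal)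
            * (|q z| * (μ (coordMap X (gsetCompl G {k, l}) ⁻¹' {z})).toReal) :=
          Finset.sum_congr rfl fun z _ => hterm z
      _ = (3 * δ₀ / pmin * (μ atom).toReal)
            * ∑ z : {x // x ∈ (gsetCompl G {k, l})} → Bool, |q z| * (μ (coordMap X (gsetCompl G {k, l}) ⁻¹' {z})).toReal :=
          (Finset.mul_sum _ _ _).symm
      _ = (3 * δ₀ * (∫ ω', |f ω'| ∂μ) / pmin) * (μ atom).toReal := by
          rw [hIabs]; ring
  have hfinal : |g ω - ∫ ω', f ω' ∂μ| * (μ atom).toReal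
      ≤ (3 * δ₀ * (∫ ω', |f ω'| ∂μ) / pmin) * (μ atom).toReal := by
    have habs : |g ω - ∫ ω', f ω' ∂μ| * (μ atom).toReal
        = |g ω * (μ atom).toReal - (∫ ω', f ω' ∂μ) * (μ atom).toReal| := by
      rw [← sub_mul, abs_mul, abs_of_nonneg hμa_pos.le]
    rw [habs, ← step3]
    exact step2
  exact le_of_mul_le_mul_right hfinal hμa_pos

end CT11
end
end

section
/- Bias bound for additive-effect estimation (claim (B.13) in the proof of the sure-screening theorem, stated in generalized form). Assume E f(X) = 0, E[f(X)²] < ∞, and p_min > 0. Let m ∈ {1,…,M} and let R : {0,1}^p → ℝ be measurable with respect to X_{−𝒳(m)} only (i.e., R(X) is a measurable function of X_{−𝒳(m)}), with E R(X) = 0 and E|R(X)| ≤ 2 √(E[f(X)²]). Then | E[ ( E( f(X) − R(X) | X_{𝒳(m)} ) )² ] − Var(g_m(X)) | ≤ 21 δ₀ p_min^{−2} E[f(X)²]. -/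
open MeasureTheory ProbabilityTheory

noncomputable section

namespace CT12

/-- The sub-σ-algebra of `Ω` generated by the coordinates of `X` lying in `S`. -/
def coordSigma {Ω : Type*} [MeasurableSpace Ω] {p : ℕ} (X : Ω → Fin p → Bool)
    (S : Finset (Fin p)) : MeasurableSpace Ω :=
  MeasurableSpace.comap (fun ω => fun i : {x // x ∈ S} => X ω i.1) inferInstance

/-- `𝒳(J)`, the union of the feature groups indexed by `J`. -/
def gset {p M : ℕ} (G : Fin M → Finset (Fin p)) (J : Finset (Fin M)) : Finset (Fin p) :=
  J.biUnion G

/-- `{1,…,p} \ 𝒳(J)` as a finset. -/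
def gsetCompl {p M : ℕ} (G : Fin M → Finset (Fin p)) (J : Finset (Fin M)) :
    Finset (Fin p) :=
  (J.biUnion G)ᶜ

/-- The conditional probability `P(X_i = 1 | X_{-𝒳(m)})` as a random variable. -/
def condProbOne {Ω : Type*} [MeasurableSpace Ω] {p M : ℕ} (μ : Measure Ω)
    (X : Ω → Fin p → Bool) (G : Fin M → Finset (Fin p)) (m : Fin M) (i : Fin p) : Ω → ℝ :=
  μ[(fun ω => if X ω i then (1 : ℝ) else 0) | coordSigma X (gsetCompl G {m})]

/-- `g_J(X) = E( f(X) - E(f(X) | X_{-𝒳(J)}) | X_{𝒳(J)} )`. -/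
def gEff {Ω : Type*} [MeasurableSpace Ω] {p M : ℕ} (μ : Measure Ω)
    (X : Ω → Fin p → Bool) (G : Fin M → Finset (Fin p)) (f : (Fin p → Bool) → ℝ)
    (J : Finset (Fin M)) : Ω → ℝ :=
  μ[(fun ω => f (X ω) - (μ[fun ω' => f (X ω') | coordSigma X (gsetCompl G J)]) ω) |
    coordSigma X (gset G J)]

/-- A real function measurable w.r.t. a comap σ-algebra is constant on fibers. -/
theorem const_on_fibers {Ω V : Type*} [MeasurableSpace Ω] {mV : MeasurableSpace V}
    {r : Ω → V} {g : Ω → ℝ} (hg : Measurable[mV.comap r] g)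
    {x y : Ω} (hxy : r x = r y) : g x = g y := by
  obtain ⟨B, -, hB⟩ :=
    MeasurableSpace.measurableSet_comap.mp (hg (measurableSet_singleton (g x)))
  have hx : x ∈ g ⁻¹' {g x} := rfl
  rw [← hB] at hx
  have hy : y ∈ r ⁻¹' B := by
    rw [Set.mem_preimage, ← hxy]; exact hx
  rw [hB] at hy
  exact (Set.mem_singleton_iff.mp hy).symm

/-- Cauchy–Schwarz on a probability space: `∫|g| ≤ √(∫ g²)`. -/
theorem integral_abs_le_sqrt {Ω : Type*} [MeasurableSpace Ω] {μ : Measure Ω}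
    [IsProbabilityMeasure μ] {g : Ω → ℝ} (hg : Integrable g μ)
    (hg2 : Integrable (fun ω => g ω ^ 2) μ) :
    ∫ ω, |g ω| ∂μ ≤ Real.sqrt (∫ ω, g ω ^ 2 ∂μ) := by
  have hmem : MemLp g 2 μ :=
    (memLp_two_iff_integrable_sq hg.aestronglyMeasurable).mpr hg2
  have habs : MemLp (fun ω => |g ω|) 2 μ := by
    simpa [Real.norm_eq_abs] using hmem.norm
  have hvar := variance_nonneg (fun ω => |g ω|) μ
  rw [variance_eq_sub habs] at hvar
  have hsq : (∫ ω, |g ω| ∂μ) ^ 2 ≤ ∫ ω, g ω ^ 2 ∂μ := by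
    have h1 : (∫ ω, ((fun ω => |g ω|) ^ 2) ω ∂μ) = ∫ ω, g ω ^ 2 ∂μ := by
      apply integral_congr_ae
      filter_upwards with ω
      simp [sq_abs]
    have h2 := sub_nonneg.mp hvar
    calc (∫ ω, |g ω| ∂μ) ^ 2 ≤ ∫ ω, ((fun ω => |g ω|) ^ 2) ω ∂μ := h2
      _ = ∫ ω, g ω ^ 2 ∂μ := h1
  have h0 : 0 ≤ ∫ ω, |g ω| ∂μ := integral_nonneg fun ω => abs_nonneg _
  calc ∫ ω, |g ω| ∂μ = Real.sqrt ((∫ ω, |g ω| ∂μ) ^ 2) := (Real.sqrt_sq h0).symm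
    _ ≤ Real.sqrt (∫ ω, g ω ^ 2 ∂μ) := Real.sqrt_le_sqrt hsq

set_option maxHeartbeats 2000000 in
/-- Bias bound for additive-effect estimation (claim (B.13), generalized form): if `R(X)` is a
function of `X_{-𝒳(m)}` with `E R(X) = 0` and `E|R(X)| ≤ 2√(E[f(X)²])`, then
`| E[(E(f(X)-R(X) | X_{𝒳(m)}))²] - Var(g_m(X)) | ≤ 21 δ₀ p_min⁻² E[f(X)²]`. -/
theorem additive_bias_bound
    {Ω : Type*} [MeasurableSpace Ω] (μ : Measure Ω) [IsProbabilityMeasure μ]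
    (p M : ℕ) (hM : 2 ≤ M)
    (X : Ω → Fin p → Bool) (hX : Measurable X)
    (G : Fin M → Finset (Fin p))
    (hdisj : ∀ l k : Fin M, l ≠ k → Disjoint (G l) (G k))
    (hcover : Finset.univ.biUnion G = (Finset.univ : Finset (Fin p)))
    (honehot : ∀ᵐ ω ∂μ, ∀ m : Fin M, 1 < (G m).card →
        ((G m).filter (fun j => X ω j = true)).card = 1)
    (f : (Fin p → Bool) → ℝ)
    (hf0 : ∫ ω, f (X ω) ∂μ = 0)
    (hf2 : Integrable (fun ω => (f (X ω)) ^ 2) μ)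
    (δ₀ : ℝ) (hδ₀_nonneg : 0 ≤ δ₀)
    (hδ₀ : ∀ m : Fin M, ∀ i ∈ G m, ∀ᵐ ω ∂μ,
        |condProbOne μ X G m i ω - (μ {ω | X ω i = true}).toReal| ≤ δ₀)
    (pmin : ℝ) (hpmin_pos : 0 < pmin)
    (hpmin : ∀ l k : Fin M, l ≠ k → ∀ i ∈ G l, ∀ j ∈ G k, ∀ a b : Bool,
        pmin ≤ (μ {ω | X ω i = a ∧ X ω j = b}).toReal)
    (m : Fin M) (R : (Fin p → Bool) → ℝ)
    (hRmeas : ∀ x x' : Fin p → Bool, (∀ j ∈ gsetCompl G {m}, x j = x' j) → R x = R x')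
    (hR0 : ∫ ω, R (X ω) ∂μ = 0)
    (hR1 : ∫ ω, |R (X ω)| ∂μ ≤ 2 * Real.sqrt (∫ ω, (f (X ω)) ^ 2 ∂μ)) :
    |(∫ ω, ((μ[fun ω' => f (X ω') - R (X ω') | coordSigma X (gset G {m})]) ω) ^ 2 ∂μ) -
        variance (gEff μ X G f {m}) μ| ≤
      21 * δ₀ * pmin⁻¹ ^ 2 * ∫ ω, (f (X ω)) ^ 2 ∂μ := by
  classical
  have hNe : Nonempty Ω := by
    by_contra hΩ
    rw [not_nonempty_iff] at hΩ
    have h1 := measure_univ (μ := μ)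
    rw [Set.univ_eq_empty_iff.mpr hΩ, measure_empty] at h1
    exact zero_ne_one h1
  -- basic abbreviations
  set I : ℝ := ∫ ω, (f (X ω)) ^ 2 ∂μ with hIdef
  have hI_nonneg : 0 ≤ I := integral_nonneg fun ω => sq_nonneg _
  have hRHS0 : 0 ≤ 21 * δ₀ * pmin⁻¹ ^ 2 * I := by positivity
  -- the coordinate restriction maps
  set r : Ω → ({x // x ∈ gset G {m}} → Bool) := fun ω => fun i => X ω i.1 with hrdef
  set rc : Ω → ({x // x ∈ gsetCompl G {m}} → Bool) := fun ω => fun i => X ω i.1 with hrcdef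
  have hr : Measurable r := measurable_pi_lambda _ fun i => (measurable_pi_apply i.1).comp hX
  have hrc : Measurable rc := measurable_pi_lambda _ fun i => (measurable_pi_apply i.1).comp hX
  have hmT_le : coordSigma X (gset G {m}) ≤ ‹MeasurableSpace Ω› := hr.comap_le
  have hmS_le : coordSigma X (gsetCompl G {m}) ≤ ‹MeasurableSpace Ω› := hrc.comap_le
  haveI hsfT : SigmaFinite (μ.trim hmT_le) := inferInstance
  haveI hsfS : SigmaFinite (μ.trim hmS_le) := inferInstance
  -- integrability of the basic functions
  obtain ⟨Cf, hCf⟩ : ∃ C, ∀ x : Fin p → Bool, |f x| ≤ C := Finite.exists_le _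
  obtain ⟨Cr, hCr⟩ : ∃ C, ∀ x : Fin p → Bool, |R x| ≤ C := Finite.exists_le _
  have hfmeas : Measurable f := measurable_of_countable f
  have hRmeas' : Measurable R := measurable_of_countable R
  have hFmeas : Measurable fun ω => f (X ω) := hfmeas.comp hX
  have hRwmeas : Measurable fun ω => R (X ω) := hRmeas'.comp hX
  have hFint : Integrable (fun ω => f (X ω)) μ :=
    (integrable_const Cf).mono' hFmeas.aestronglyMeasurable
      (Filter.Eventually.of_forall fun ω => by simpa [Real.norm_eq_abs] using hCf (X ω))
  have hRint : Integrable (fun ω => R (X ω)) μ :=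
    (integrable_const Cr).mono' hRwmeas.aestronglyMeasurable
      (Filter.Eventually.of_forall fun ω => by simpa [Real.norm_eq_abs] using hCr (X ω))
  -- the conditional expectation h = E[f(X) | X_{-G(m)}]
  simp only [gEff]
  set h : Ω → ℝ := μ[fun ω' => f (X ω') | coordSigma X (gsetCompl G {m})] with hhdef
  have hh_int : Integrable h μ := integrable_condExp
  have hh0 : ∫ ω, h ω ∂μ = 0 := by
    rw [hhdef, integral_condExp hmS_le]; exact hf0
  have hh_SM : StronglyMeasurable[coordSigma X (gsetCompl G {m})] h := by
    rw [hhdef]; exact stronglyMeasurable_condExp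
  -- R(X) is measurable w.r.t. X_{-G(m)}
  have hRw_SM : StronglyMeasurable[coordSigma X (gsetCompl G {m})] (fun ω => R (X ω)) := by
    have hfact : ∀ ω, R (X ω) = (fun v : {x // x ∈ gsetCompl G {m}} → Bool =>
        R (fun j => if hj : j ∈ gsetCompl G {m} then v ⟨j, hj⟩ else false)) (rc ω) := by
      intro ω
      exact hRmeas _ _ fun j hj => by simp [hrcdef, hj]
    have hmc : Measurable[coordSigma X (gsetCompl G {m})] rc := Measurable.of_comap_le le_rfl
    have : Measurable[coordSigma X (gsetCompl G {m})] (fun ω => R (X ω)) := by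
      rw [show (fun ω => R (X ω)) = (fun v : {x // x ∈ gsetCompl G {m}} → Bool =>
          R (fun j => if hj : j ∈ gsetCompl G {m} then v ⟨j, hj⟩ else false)) ∘ rc
        from funext hfact]
      exact (measurable_of_countable _).comp hmc
    exact this.stronglyMeasurable
  -- u = h - R(X)
  set u : Ω → ℝ := fun ω => h ω - R (X ω) with hudef
  have hu_int : Integrable u μ := hh_int.sub hRint
  have hu0 : ∫ ω, u ω ∂μ = 0 := by
    rw [hudef]
    rw [integral_sub hh_int hRint, hh0, hR0, sub_zero]
  have hu_SM : StronglyMeasurable[coordSigma X (gsetCompl G {m})] u := hh_SM.sub hRw_SM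
  have huabs_int : Integrable (fun ω => |u ω|) μ := hu_int.abs
  have huabs0 : 0 ≤ ∫ ω, |u ω| ∂μ := integral_nonneg fun ω => abs_nonneg _
  -- atoms of the σ-algebra generated by X_{G(m)}
  set A : ({x // x ∈ gset G {m}} → Bool) → Set Ω := fun v => r ⁻¹' {v} with hAdef
  have hA_meas : ∀ v, MeasurableSet (A v) := fun v => hr (measurableSet_singleton v)
  have hA_measT : ∀ v, MeasurableSet[coordSigma X (gset G {m})] (A v) := fun v =>
    ⟨{v}, measurableSet_singleton v, rfl⟩
  have hA_mem : ∀ v ω, ω ∈ A v ↔ r ω = v := by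
    intro v ω; simp [hAdef]
  have hA_disj : Pairwise (Function.onFun Disjoint A) := by
    intro v w hvw
    apply Set.disjoint_left.mpr
    intro ω h1 h2
    exact hvw (((hA_mem v ω).mp h1).symm.trans ((hA_mem w ω).mp h2))
  have hA_cover : ⋃ v, A v = Set.univ := by
    ext ω
    simp only [Set.mem_iUnion, Set.mem_univ, iff_true]
    exact ⟨r ω, (hA_mem _ ω).mpr rfl⟩
  have hsum : ∀ g : Ω → ℝ, Integrable g μ →
      ∫ ω, g ω ∂μ = ∑ v, ∫ ω in A v, g ω ∂μ := by
    intro g hg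
    rw [← setIntegral_univ, ← hA_cover,
      integral_iUnion_fintype hA_meas hA_disj fun v => hg.integrableOn]
  -- representation of T-measurable functions as functions of the atoms
  have hconst : ∀ g : Ω → ℝ, StronglyMeasurable[coordSigma X (gset G {m})] g →
      ∀ x y : Ω, r x = r y → g x = g y := by
    intro g hg x y hxy
    exact const_on_fibers hg.measurable hxy
  have hrep : ∀ g : Ω → ℝ, StronglyMeasurable[coordSigma X (gset G {m})] g →
      ∃ φ : ({x // x ∈ gset G {m}} → Bool) → ℝ, ∀ ω, g ω = φ (r ω) := by
    intro g hg
    refine ⟨fun v => if hv : ∃ ω, r ω = v then g hv.choose else 0, fun ω => ?_⟩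
    have hex : ∃ ω', r ω' = r ω := ⟨ω, rfl⟩
    have hbeta : (fun v => if hv : ∃ ω'', r ω'' = v then g hv.choose else 0) (r ω)
        = if hv : ∃ ω'', r ω'' = r ω then g hv.choose else 0 := rfl
    rw [hbeta, dif_pos hex]
    exact hconst g hg ω hex.choose hex.choose_spec.symm
  -- the two conditional expectations
  set g1 : Ω → ℝ := μ[fun ω' => f (X ω') - R (X ω') | coordSigma X (gset G {m})] with hg1def
  set g2 : Ω → ℝ := μ[fun ω => f (X ω) - h ω | coordSigma X (gset G {m})] with hg2def
  have hFR_int : Integrable (fun ω' => f (X ω') - R (X ω')) μ := hFint.sub hRint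
  have hFh_int : Integrable (fun ω => f (X ω) - h ω) μ := hFint.sub hh_int
  have hg1_SM : StronglyMeasurable[coordSigma X (gset G {m})] g1 := by
    rw [hg1def]; exact stronglyMeasurable_condExp
  have hg2_SM : StronglyMeasurable[coordSigma X (gset G {m})] g2 := by
    rw [hg2def]; exact stronglyMeasurable_condExp
  obtain ⟨φ1, hφ1⟩ := hrep g1 hg1_SM
  obtain ⟨φ2, hφ2⟩ := hrep g2 hg2_SM
  -- values of the conditional expectations on atoms
  have hval : ∀ (g : Ω → ℝ) (φ : ({x // x ∈ gset G {m}} → Bool) → ℝ),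
      (∀ ω, g ω = φ (r ω)) → ∀ v, ∫ ω in A v, g ω ∂μ = φ v * (μ (A v)).toReal := by
    intro g φ hφ v
    have heq : ∀ ω ∈ A v, g ω = φ v := by
      intro ω hω
      rw [hφ, (hA_mem v ω).mp hω]
    rw [setIntegral_congr_fun (hA_meas v) heq, setIntegral_const, smul_eq_mul, mul_comm, measureReal_def]
  have hval1 : ∀ v, φ1 v * (μ (A v)).toReal = ∫ ω in A v, (f (X ω) - R (X ω)) ∂μ := by
    intro v
    rw [← hval g1 φ1 hφ1 v, hg1def]
    exact setIntegral_condExp hmT_le hFR_int (hA_measT v)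
  have hval2 : ∀ v, φ2 v * (μ (A v)).toReal = ∫ ω in A v, (f (X ω) - h ω) ∂μ := by
    intro v
    rw [← hval g2 φ2 hφ2 v, hg2def]
    exact setIntegral_condExp hmT_le hFh_int (hA_measT v)
  -- the difference of the atom values is the integral of u over the atom
  have hdiff : ∀ v, (φ1 v - φ2 v) * (μ (A v)).toReal = ∫ ω in A v, u ω ∂μ := by
    intro v
    have heq : (φ1 v - φ2 v) * (μ (A v)).toReal
        = φ1 v * (μ (A v)).toReal - φ2 v * (μ (A v)).toReal := by ring
    rw [heq, hval1, hval2, ← integral_sub (hFR_int.integrableOn) (hFh_int.integrableOn)]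
    apply integral_congr_ae
    filter_upwards with ω
    rw [hudef]
    ring
  -- boundedness of g1, g2 and the first quantity as a sum over atoms
  obtain ⟨C1, hC1⟩ : ∃ C, ∀ v, |φ1 v| ≤ C := Finite.exists_le _
  obtain ⟨C2, hC2⟩ : ∃ C, ∀ v, |φ2 v| ≤ C := Finite.exists_le _
  have hg1sq_int : Integrable (fun ω => g1 ω ^ 2) μ := by
    refine (integrable_const (C1 ^ 2)).mono'
      ((hg1_SM.mono hmT_le).measurable.pow_const 2).aestronglyMeasurable
      (Filter.Eventually.of_forall fun ω => ?_)
    rw [Real.norm_eq_abs, hφ1 ω, abs_pow]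
    exact pow_le_pow_left₀ (abs_nonneg _) (hC1 (r ω)) 2
  have hA_eq : ∫ ω, g1 ω ^ 2 ∂μ = ∑ v, φ1 v ^ 2 * (μ (A v)).toReal := by
    rw [hsum _ hg1sq_int]
    exact Finset.sum_congr rfl fun v _ =>
      hval _ (fun v => φ1 v ^ 2) (fun ω => by rw [hφ1]) v
  -- the variance as a sum over atoms
  have hg2_0 : ∫ ω, g2 ω ∂μ = 0 := by
    rw [hg2def, integral_condExp hmT_le, integral_sub hFint hh_int, hf0, hh0, sub_zero]
  have hg2mem : MemLp g2 2 μ := by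
    refine MemLp.of_bound (hg2_SM.mono hmT_le).aestronglyMeasurable C2
      (Filter.Eventually.of_forall fun ω => ?_)
    rw [Real.norm_eq_abs, hφ2 ω]
    exact hC2 _
  have hg2sq_int : Integrable (fun ω => g2 ω ^ 2) μ := by
    refine (integrable_const (C2 ^ 2)).mono'
      ((hg2_SM.mono hmT_le).measurable.pow_const 2).aestronglyMeasurable
      (Filter.Eventually.of_forall fun ω => ?_)
    rw [Real.norm_eq_abs, hφ2 ω, abs_pow]
    exact pow_le_pow_left₀ (abs_nonneg _) (hC2 (r ω)) 2
  have hVar : variance g2 μ = ∑ v, φ2 v ^ 2 * (μ (A v)).toReal := by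
    rw [variance_eq_sub hg2mem]
    have h1 : (μ[g2 ^ 2] : ℝ) = ∫ ω, g2 ω ^ 2 ∂μ := by
      apply integral_congr_ae
      filter_upwards with ω
      simp
    have h2 : (μ[g2] : ℝ) = 0 := hg2_0
    rw [h1, h2]
    rw [hsum _ hg2sq_int]
    simp only [ne_eq, OfNat.ofNat_ne_zero, not_false_eq_true, zero_pow, sub_zero]
    exact Finset.sum_congr rfl fun v _ =>
      hval _ (fun v => φ2 v ^ 2) (fun ω => by rw [hφ2]) v
  rw [hA_eq, hVar, ← Finset.sum_sub_distrib]
  -- Branch I : G m = ∅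
  rcases eq_or_ne (G m) ∅ with hGm | hGm
  · have hgs : gset G {m} = ∅ := by
      rw [show gset G {m} = G m from Finset.singleton_biUnion, hGm]
    have hAuniv : ∀ v, A v = Set.univ := by
      intro v
      ext ω
      simp only [Set.mem_univ, iff_true, hA_mem]
      funext i
      exact absurd i.2 (Finset.eq_empty_iff_forall_notMem.mp hgs i.1)
    have hφ1z : ∀ v, φ1 v = 0 := by
      intro v
      have := hval1 v
      rw [hAuniv v, measure_univ, setIntegral_univ, integral_sub hFint hRint, hf0, hR0] at this
      simpa using this
    have hφ2z : ∀ v, φ2 v = 0 := by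
      intro v
      have := hval2 v
      rw [hAuniv v, measure_univ, setIntegral_univ, integral_sub hFint hh_int, hf0, hh0] at this
      simpa using this
    have : ∀ v ∈ (Finset.univ : Finset ({x // x ∈ gset G {m}} → Bool)),
        φ1 v ^ 2 * (μ (A v)).toReal - φ2 v ^ 2 * (μ (A v)).toReal = 0 := by
      intro v _
      rw [hφ1z, hφ2z]; ring
    rw [Finset.sum_congr rfl this, Finset.sum_const_zero, abs_zero]
    exact hRHS0
  -- Branch II : gsetCompl G {m} = ∅
  rcases eq_or_ne (gsetCompl G {m}) ∅ with hSc | hSc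
  · -- here mS = ⊥, so h = 0 and R(X) = 0, whence the two integrands agree
    have hbot : coordSigma X (gsetCompl G {m}) = ⊥ := by
      apply le_antisymm _ bot_le
      intro s hs
      obtain ⟨B, -, rfl⟩ := MeasurableSpace.measurableSet_comap.mp hs
      rw [MeasurableSpace.measurableSet_bot_iff]
      haveI hie : IsEmpty {x // x ∈ gsetCompl G {m}} :=
        ⟨fun i => absurd i.2 (Finset.eq_empty_iff_forall_notMem.mp hSc i.1)⟩
      rcases Set.eq_empty_or_nonempty B with hB | ⟨b, hb⟩
      · left; rw [hB]; exact Set.preimage_empty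
      · right
        apply Set.eq_univ_of_forall
        intro ω
        have hrcb : rc ω = b := Subsingleton.elim _ _
        show rc ω ∈ B
        rw [hrcb]; exact hb
    have hh_eq : h = fun _ => (0 : ℝ) := by
      rw [hhdef, hbot, condExp_bot, hf0]
    have hcRw : ∀ ω ω', R (X ω) = R (X ω') := fun ω ω' =>
      hRmeas _ _ fun j hj => absurd (hSc ▸ hj) (Finset.notMem_empty _)
    obtain ⟨ω₀⟩ := hNe
    have hRw0 : ∀ ω, R (X ω) = 0 := by
      have hconst' : (fun ω => R (X ω)) = fun _ => R (X ω₀) := funext fun ω => hcRw ω ω₀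
      have : ∫ ω, R (X ω) ∂μ = R (X ω₀) := by
        rw [hconst', integral_const]
        simp
      intro ω
      rw [hcRw ω ω₀, ← this, hR0]
    have hsame : ∀ v, φ1 v * (μ (A v)).toReal = φ2 v * (μ (A v)).toReal := by
      intro v
      rw [hval1, hval2]
      congr 1
      funext ω
      rw [hRw0, congrFun hh_eq ω]
    have : ∀ v ∈ (Finset.univ : Finset ({x // x ∈ gset G {m}} → Bool)),
        φ1 v ^ 2 * (μ (A v)).toReal - φ2 v ^ 2 * (μ (A v)).toReal = 0 := by
      intro v _
      rcases eq_or_ne (μ (A v)) 0 with h0 | h0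
      · rw [h0]; simp
      · have ht : (μ (A v)).toReal ≠ 0 :=
          ENNReal.toReal_ne_zero.mpr ⟨h0, measure_ne_top μ _⟩
        have hφeq : φ1 v = φ2 v := mul_right_cancel₀ ht (hsame v)
        rw [hφeq]; ring
    rw [Finset.sum_congr rfl this, Finset.sum_const_zero, abs_zero]
    exact hRHS0
  -- Branch III : the main case
  obtain ⟨i₀, hi₀⟩ := Finset.nonempty_iff_ne_empty.mpr hGm
  obtain ⟨j₀, hj₀c⟩ := Finset.nonempty_iff_ne_empty.mpr hSc
  have hj₀nGm : j₀ ∉ G m := by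
    have h1 : j₀ ∈ (Finset.biUnion {m} G)ᶜ := hj₀c
    rw [Finset.mem_compl, Finset.singleton_biUnion] at h1
    exact h1
  obtain ⟨k₀, hk₀⟩ : ∃ k, j₀ ∈ G k := by
    have h1 : j₀ ∈ Finset.univ.biUnion G := hcover ▸ Finset.mem_univ j₀
    obtain ⟨k, -, hk⟩ := Finset.mem_biUnion.mp h1
    exact ⟨k, hk⟩
  have hk₀m : m ≠ k₀ := fun hder => hj₀nGm (hder ▸ hk₀)
  have htoReal_le_one : ∀ s : Set Ω, (μ s).toReal ≤ 1 := by
    intro s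
    have := prob_le_one (μ := μ) (s := s)
    simpa using ENNReal.toReal_mono ENNReal.one_ne_top this
  have hpmin1 : pmin ≤ 1 :=
    (hpmin m k₀ hk₀m i₀ hi₀ j₀ hk₀ true true).trans (htoReal_le_one _)
  -- the events B i = {X_i = 1}
  have hBmeas : ∀ i : Fin p, MeasurableSet {ω | X ω i = true} := fun i =>
    (measurable_pi_apply i).comp hX (measurableSet_singleton true)
  have hpminB : ∀ i ∈ G m, pmin ≤ (μ {ω | X ω i = true}).toReal ∧
      pmin ≤ (μ {ω | X ω i = true}ᶜ).toReal := by
    intro i hi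
    constructor
    · refine (hpmin m k₀ hk₀m i hi j₀ hk₀ true true).trans ?_
      refine ENNReal.toReal_mono (measure_ne_top μ _) (measure_mono ?_)
      rintro ω ⟨h1, -⟩
      exact h1
    · refine (hpmin m k₀ hk₀m i hi j₀ hk₀ false true).trans ?_
      refine ENNReal.toReal_mono (measure_ne_top μ _) (measure_mono ?_)
      rintro ω ⟨h1, -⟩
      simp only [Set.mem_compl_iff, Set.mem_setOf_eq]
      rw [h1]
      simp
  -- the key bound on ∫_{B i} u
  have hkeyB : ∀ i ∈ G m, |∫ ω in {ω | X ω i = true}, u ω ∂μ| ≤ δ₀ * ∫ ω, |u ω| ∂μ := by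
    intro i hi
    set q : Ω → ℝ := condProbOne μ X G m i with hqdef
    set pii : ℝ := (μ {ω | X ω i = true}).toReal with hpiidef
    have hq_bound : ∀ᵐ ω ∂μ, |q ω - pii| ≤ δ₀ := hδ₀ m i hi
    have hind_meas : Measurable (fun ω => if X ω i then (1 : ℝ) else 0) := by
      apply Measurable.ite _ measurable_const measurable_const
      exact (measurable_pi_apply i).comp hX (measurableSet_singleton true)
    have hind_int : Integrable (fun ω => if X ω i then (1 : ℝ) else 0) μ :=
      (integrable_const (1 : ℝ)).mono' hind_meas.aestronglyMeasurable
        (Filter.Eventually.of_forall fun ω => by by_cases hω : X ω i <;> simp [hω])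
    have hq_int : Integrable q μ := integrable_condExp
    have hprod_int : Integrable (fun ω => u ω * (if X ω i then (1 : ℝ) else 0)) μ := by
      have := hu_int.bdd_mul (c := 1) hind_meas.aestronglyMeasurable
        (Filter.Eventually.of_forall fun ω => by by_cases hω : X ω i <;> simp [hω])
      exact this.congr (Filter.Eventually.of_forall fun ω => mul_comm _ _)
    have h1 : ∫ ω in {ω | X ω i = true}, u ω ∂μ
        = ∫ ω, u ω * (if X ω i then (1 : ℝ) else 0) ∂μ := by
      rw [← integral_indicator (hBmeas i)]
      congr 1
      funext ω
      by_cases hω : X ω i <;> simp [Set.indicator_apply, hω]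
    have h2 : (fun ω => u ω * (if X ω i then (1 : ℝ) else 0)) = u * (fun ω => if X ω i then (1 : ℝ) else 0) := rfl
    have h3 : μ[u * (fun ω => if X ω i then (1 : ℝ) else 0) | coordSigma X (gsetCompl G {m})]
        =ᵐ[μ] u * q := by
      rw [hqdef, condProbOne]
      exact condExp_mul_of_stronglyMeasurable_left hu_SM (h2 ▸ hprod_int) hind_int
    have h4 : ∫ ω, u ω * (if X ω i then (1 : ℝ) else 0) ∂μ = ∫ ω, u ω * q ω ∂μ := by
      calc ∫ ω, u ω * (if X ω i then (1 : ℝ) else 0) ∂μ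
          = ∫ ω, (μ[u * (fun ω => if X ω i then (1 : ℝ) else 0) |
              coordSigma X (gsetCompl G {m})]) ω ∂μ := by
            rw [integral_condExp hmS_le]
            rfl
        _ = ∫ ω, (u * q) ω ∂μ := integral_congr_ae h3
        _ = ∫ ω, u ω * q ω ∂μ := rfl
    have huqp_int : Integrable (fun ω => u ω * (q ω - pii)) μ := by
      have := hu_int.bdd_mul (c := δ₀)
        ((hq_int.sub (integrable_const pii)).aestronglyMeasurable)
        (by filter_upwards [hq_bound] with ω hω; simpa [Real.norm_eq_abs] using hω)
      exact this.congr (Filter.Eventually.of_forall fun ω => mul_comm _ _)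
    have h5 : ∫ ω, u ω * q ω ∂μ = ∫ ω, u ω * (q ω - pii) ∂μ := by
      have heq : (fun ω => u ω * q ω) = fun ω => u ω * (q ω - pii) + pii * u ω := by
        funext ω; ring
      rw [heq, integral_add huqp_int (hu_int.const_mul pii), integral_const_mul, hu0,
        mul_zero, add_zero]
    rw [h1, h4, h5]
    calc |∫ ω, u ω * (q ω - pii) ∂μ| ≤ ∫ ω, |u ω * (q ω - pii)| ∂μ := by
          have hni := norm_integral_le_integral_norm (μ := μ) (fun ω => u ω * (q ω - pii))
          simpa only [Real.norm_eq_abs] using hni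
      _ ≤ ∫ ω, δ₀ * |u ω| ∂μ := by
          refine integral_mono_ae huqp_int.abs (huabs_int.const_mul δ₀) ?_
          filter_upwards [hq_bound] with ω hω
          rw [abs_mul, mul_comm]
          exact mul_le_mul_of_nonneg_right hω (abs_nonneg _)
      _ = δ₀ * ∫ ω, |u ω| ∂μ := integral_const_mul δ₀ _
  -- the per-atom facts
  have hgseteq : gset G {m} = G m := Finset.singleton_biUnion
  have hmemGm : ∀ a : Fin p, a ∈ gset G {m} ↔ a ∈ G m := fun a => by rw [hgseteq]
  have higset : ∀ i, i ∈ G m → i ∈ gset G {m} := fun i hi => (hmemGm i).mpr hi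
  have hatom : ∀ v, μ (A v) ≠ 0 → pmin ≤ (μ (A v)).toReal ∧
      |∫ ω in A v, u ω ∂μ| ≤ δ₀ * ∫ ω, |u ω| ∂μ := by
    rcases eq_or_lt_of_le (Finset.one_le_card.mpr (Finset.nonempty_iff_ne_empty.mpr hGm))
      with hcard1 | hcard2
    · -- #G m = 1
      obtain ⟨i, hGi⟩ := Finset.card_eq_one.mp hcard1.symm
      have hiGm : i ∈ G m := by rw [hGi]; exact Finset.mem_singleton_self i
      have hig : i ∈ gset G {m} := higset i hiGm
      have hAv : ∀ v, A v = {ω | X ω i = v ⟨i, hig⟩} := by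
        intro v
        ext ω
        rw [hA_mem]
        constructor
        · intro hrv
          exact congrFun hrv ⟨i, hig⟩
        · intro hXi
          funext j
          have hj1 : j.1 = i := by
            have hj2 := (hmemGm j.1).mp j.2
            rw [hGi, Finset.mem_singleton] at hj2
            exact hj2
          have hj : j = ⟨i, hig⟩ := Subtype.ext hj1
          rw [hj]
          exact hXi
      intro v hv
      by_cases hb : v ⟨i, hig⟩ = true
      · -- atom is B_i
        have hset : A v = {ω | X ω i = true} := by rw [hAv, hb]
        rw [hset]
        exact ⟨(hpminB i hiGm).1, hkeyB i hiGm⟩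
      · -- atom is B_iᶜ
        have hb' : v ⟨i, hig⟩ = false := by
          rcases Bool.eq_false_or_eq_true (v ⟨i, hig⟩) with hb2 | hb2
          · exact absurd hb2 hb
          · exact hb2
        have hset : A v = {ω | X ω i = true}ᶜ := by
          rw [hAv, hb']
          ext ω
          simp [Bool.not_eq_true]
        rw [hset]
        refine ⟨(hpminB i hiGm).2, ?_⟩
        have hcompl := integral_add_compl (hBmeas i) hu_int
        have hnegint : ∫ ω in {ω | X ω i = true}ᶜ, u ω ∂μ
            = - ∫ ω in {ω | X ω i = true}, u ω ∂μ := by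
          rw [hu0] at hcompl
          linarith
        rw [hnegint, abs_neg]
        exact hkeyB i hiGm
    · -- #G m ≥ 2 : one-hot structure
      intro v hv
      have hgood : ∀ᵐ ω ∂μ, ((G m).filter (fun j => X ω j = true)).card = 1 :=
        honehot.mono fun ω H => H m hcard2
      have hbad : μ {ω | ¬ ((G m).filter (fun j => X ω j = true)).card = 1} = 0 := by
        rw [← ae_iff]
        exact hgood
      have hpos : μ (A v ∩ {ω | ((G m).filter (fun j => X ω j = true)).card = 1}) ≠ 0 := by
        rw [measure_inter_conull]
        · exact hv
        · exact hbad
      obtain ⟨ω₁, hω₁A, hω₁g⟩ := nonempty_of_measure_ne_zero hpos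
      have hrω₁ : r ω₁ = v := (hA_mem v ω₁).mp hω₁A
      obtain ⟨i, hfi⟩ := Finset.card_eq_one.mp hω₁g
      have hifi : i ∈ (G m).filter (fun j => X ω₁ j = true) := by
        rw [hfi]; exact Finset.mem_singleton_self i
      have hiGm : i ∈ G m := (Finset.mem_filter.mp hifi).1
      have hXω₁ : ∀ j ∈ G m, (X ω₁ j = true ↔ j = i) := by
        intro j hj
        constructor
        · intro hXj
          have hjf : j ∈ (G m).filter (fun j => X ω₁ j = true) := Finset.mem_filter.mpr ⟨hj, hXj⟩
          rw [hfi, Finset.mem_singleton] at hjf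
          exact hjf
        · rintro rfl
          exact (Finset.mem_filter.mp hifi).2
      have haeset : A v =ᵐ[μ] {ω | X ω i = true} := by
        rw [Filter.eventuallyEq_set]
        filter_upwards [hgood] with ω hω
        obtain ⟨i', hfi'⟩ := Finset.card_eq_one.mp hω
        have hifi' : i' ∈ (G m).filter (fun j => X ω j = true) := by
          rw [hfi']; exact Finset.mem_singleton_self i'
        have hi'Gm : i' ∈ G m := (Finset.mem_filter.mp hifi').1
        have hXω : ∀ j ∈ G m, (X ω j = true ↔ j = i') := by
          intro j hj
          constructor
          · intro hXj
            have hjf : j ∈ (G m).filter (fun j => X ω j = true) := Finset.mem_filter.mpr ⟨hj, hXj⟩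
            rw [hfi', Finset.mem_singleton] at hjf
            exact hjf
          · rintro rfl
            exact (Finset.mem_filter.mp hifi').2
        constructor
        · intro hA
          have hrω : r ω = v := (hA_mem v ω).mp hA
          -- X ω and X ω₁ agree on G m
          have hagree : ∀ j ∈ G m, X ω j = X ω₁ j := by
            intro j hj
            have := congrFun (hrω.trans hrω₁.symm) ⟨j, higset j hj⟩
            exact this
          have hii' : i' = i := by
            have h1 : X ω₁ i' = true := by rw [← hagree i' hi'Gm]; exact (hXω i' hi'Gm).mpr rfl
            exact (hXω₁ i' hi'Gm).mp h1
          show X ω i = true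
          exact (hXω i hiGm).mpr hii'.symm
        · intro hBi
          have hXωi : X ω i = true := hBi
          have hii' : i' = i := ((hXω i hiGm).mp hXωi).symm
          show r ω = v
          rw [← hrω₁]
          funext j
          have hjGm : j.1 ∈ G m := (hmemGm j.1).mp j.2
          show X ω j.1 = X ω₁ j.1
          have hiff : (X ω j.1 = true ↔ X ω₁ j.1 = true) := by
            rw [hXω j.1 hjGm, hXω₁ j.1 hjGm, hii']
          exact (by decide : ∀ a b : Bool, (a = true ↔ b = true) → a = b) _ _ hiff
      have hμeq : μ (A v) = μ {ω | X ω i = true} := measure_congr haeset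
      have hinteq : ∫ ω in A v, u ω ∂μ = ∫ ω in {ω | X ω i = true}, u ω ∂μ :=
        setIntegral_congr_set haeset
      rw [hμeq, hinteq]
      exact ⟨(hpminB i hiGm).1, hkeyB i hiGm⟩
  -- assembling the estimate
  have hkey : ∀ v, |φ1 v ^ 2 * (μ (A v)).toReal - φ2 v ^ 2 * (μ (A v)).toReal|
      ≤ (δ₀ * (∫ ω, |u ω| ∂μ) / pmin) * ((|φ1 v| + |φ2 v|) * (μ (A v)).toReal) := by
    intro v
    rcases eq_or_ne (μ (A v)) 0 with h0 | h0
    · rw [h0]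
      simp
    · obtain ⟨hpm, hint⟩ := hatom v h0
      set t : ℝ := (μ (A v)).toReal with htdef
      have ht_pos : 0 < t := lt_of_lt_of_le hpmin_pos hpm
      have hd : |φ1 v - φ2 v| * t ≤ δ₀ * ∫ ω, |u ω| ∂μ := by
        have hdv := hdiff v
        calc |φ1 v - φ2 v| * t = |(φ1 v - φ2 v) * t| := by
              rw [abs_mul, abs_of_nonneg ht_pos.le]
          _ = |∫ ω in A v, u ω ∂μ| := by rw [hdv]
          _ ≤ δ₀ * ∫ ω, |u ω| ∂μ := hint
      have hd2 : |φ1 v - φ2 v| ≤ δ₀ * (∫ ω, |u ω| ∂μ) / pmin := by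
        rw [div_eq_mul_inv]
        calc |φ1 v - φ2 v| = (|φ1 v - φ2 v| * t) * t⁻¹ := by
              field_simp
          _ ≤ (δ₀ * ∫ ω, |u ω| ∂μ) * t⁻¹ := by
              apply mul_le_mul_of_nonneg_right hd (by positivity)
          _ ≤ (δ₀ * ∫ ω, |u ω| ∂μ) * pmin⁻¹ := by
              apply mul_le_mul_of_nonneg_left _ (by positivity)
              exact inv_anti₀ hpmin_pos hpm
      calc |φ1 v ^ 2 * t - φ2 v ^ 2 * t| = |(φ1 v - φ2 v) * (φ1 v + φ2 v) * t| := by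
            congr 1
            ring
        _ = |φ1 v - φ2 v| * |φ1 v + φ2 v| * t := by
            rw [abs_mul, abs_mul, abs_of_nonneg ht_pos.le]
        _ ≤ (δ₀ * (∫ ω, |u ω| ∂μ) / pmin) * ((|φ1 v| + |φ2 v|) * t) := by
            rw [mul_assoc]
            apply mul_le_mul hd2 _ (by positivity) (by positivity)
            exact mul_le_mul_of_nonneg_right (abs_add_le _ _) ht_pos.le
  -- sum of |φ| * μ(A v) is bounded by integrals of absolute values
  have hsum1 : ∑ v, |φ1 v| * (μ (A v)).toReal ≤ ∫ ω, |f (X ω) - R (X ω)| ∂μ := by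
    rw [hsum _ hFR_int.abs]
    apply Finset.sum_le_sum
    intro v _
    calc |φ1 v| * (μ (A v)).toReal = |φ1 v * (μ (A v)).toReal| := by
          rw [abs_mul, abs_of_nonneg ENNReal.toReal_nonneg]
      _ = |∫ ω in A v, (f (X ω) - R (X ω)) ∂μ| := by rw [hval1]
      _ ≤ ∫ ω in A v, |f (X ω) - R (X ω)| ∂μ := by
          simpa [Real.norm_eq_abs] using norm_integral_le_integral_norm
            (fun ω => f (X ω) - R (X ω)) (μ := μ.restrict (A v))
  have hsum2 : ∑ v, |φ2 v| * (μ (A v)).toReal ≤ ∫ ω, |f (X ω) - h ω| ∂μ := by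
    rw [hsum _ hFh_int.abs]
    apply Finset.sum_le_sum
    intro v _
    calc |φ2 v| * (μ (A v)).toReal = |φ2 v * (μ (A v)).toReal| := by
          rw [abs_mul, abs_of_nonneg ENNReal.toReal_nonneg]
      _ = |∫ ω in A v, (f (X ω) - h ω) ∂μ| := by rw [hval2]
      _ ≤ ∫ ω in A v, |f (X ω) - h ω| ∂μ := by
          simpa [Real.norm_eq_abs] using norm_integral_le_integral_norm
            (fun ω => f (X ω) - h ω) (μ := μ.restrict (A v))
  -- L¹ bounds in terms of √I
  set s : ℝ := Real.sqrt I with hsdef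
  have hs_nonneg : 0 ≤ s := Real.sqrt_nonneg _
  have hs_sq : s * s = I := Real.mul_self_sqrt hI_nonneg
  have habsF : ∫ ω, |f (X ω)| ∂μ ≤ s := integral_abs_le_sqrt hFint hf2
  have habsh : ∫ ω, |h ω| ∂μ ≤ s := by
    have h1 : ∫ ω, |h ω| ∂μ ≤ ∫ ω, |f (X ω)| ∂μ := by
      rw [hhdef]
      exact integral_abs_condExp_le _
    exact h1.trans habsF
  have habsR : ∫ ω, |R (X ω)| ∂μ ≤ 2 * s := hR1
  have habs_sub : ∀ (a b : Ω → ℝ), Integrable a μ → Integrable b μ →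
      ∫ ω, |a ω - b ω| ∂μ ≤ (∫ ω, |a ω| ∂μ) + ∫ ω, |b ω| ∂μ := by
    intro a b ha hb
    calc ∫ ω, |a ω - b ω| ∂μ ≤ ∫ ω, (|a ω| + |b ω|) ∂μ := by
          refine integral_mono (ha.sub hb).abs (ha.abs.add hb.abs) fun ω => ?_
          exact abs_sub _ _
      _ = (∫ ω, |a ω| ∂μ) + ∫ ω, |b ω| ∂μ := integral_add ha.abs hb.abs
  have hu_abs : ∫ ω, |u ω| ∂μ ≤ 3 * s := by
    have := habs_sub h (fun ω => R (X ω)) hh_int hRint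
    rw [hudef]
    calc ∫ ω, |h ω - R (X ω)| ∂μ ≤ (∫ ω, |h ω| ∂μ) + ∫ ω, |R (X ω)| ∂μ := this
      _ ≤ s + 2 * s := add_le_add habsh habsR
      _ = 3 * s := by ring
  have hFR_abs : ∫ ω, |f (X ω) - R (X ω)| ∂μ ≤ 3 * s := by
    have := habs_sub (fun ω => f (X ω)) (fun ω => R (X ω)) hFint hRint
    calc ∫ ω, |f (X ω) - R (X ω)| ∂μ ≤ (∫ ω, |f (X ω)| ∂μ) + ∫ ω, |R (X ω)| ∂μ := this
      _ ≤ s + 2 * s := add_le_add habsF habsR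
      _ = 3 * s := by ring
  have hFh_abs : ∫ ω, |f (X ω) - h ω| ∂μ ≤ 2 * s := by
    have := habs_sub (fun ω => f (X ω)) h hFint hh_int
    calc ∫ ω, |f (X ω) - h ω| ∂μ ≤ (∫ ω, |f (X ω)| ∂μ) + ∫ ω, |h ω| ∂μ := this
      _ ≤ s + s := add_le_add habsF habsh
      _ = 2 * s := by ring
  -- final chain
  have hfinal : |∑ v, (φ1 v ^ 2 * (μ (A v)).toReal - φ2 v ^ 2 * (μ (A v)).toReal)|
      ≤ (δ₀ * (∫ ω, |u ω| ∂μ) / pmin) *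
        ((∫ ω, |f (X ω) - R (X ω)| ∂μ) + ∫ ω, |f (X ω) - h ω| ∂μ) := by
    calc |∑ v, (φ1 v ^ 2 * (μ (A v)).toReal - φ2 v ^ 2 * (μ (A v)).toReal)|
        ≤ ∑ v, |φ1 v ^ 2 * (μ (A v)).toReal - φ2 v ^ 2 * (μ (A v)).toReal| :=
          Finset.abs_sum_le_sum_abs _ _
      _ ≤ ∑ v, (δ₀ * (∫ ω, |u ω| ∂μ) / pmin) * ((|φ1 v| + |φ2 v|) * (μ (A v)).toReal) :=
          Finset.sum_le_sum fun v _ => hkey v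
      _ = (δ₀ * (∫ ω, |u ω| ∂μ) / pmin) *
          ∑ v, (|φ1 v| + |φ2 v|) * (μ (A v)).toReal := by rw [Finset.mul_sum]
      _ ≤ (δ₀ * (∫ ω, |u ω| ∂μ) / pmin) *
          ((∫ ω, |f (X ω) - R (X ω)| ∂μ) + ∫ ω, |f (X ω) - h ω| ∂μ) := by
          apply mul_le_mul_of_nonneg_left _ (by positivity)
          have : ∑ v, (|φ1 v| + |φ2 v|) * (μ (A v)).toReal
              = (∑ v, |φ1 v| * (μ (A v)).toReal) + ∑ v, |φ2 v| * (μ (A v)).toReal := by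
            rw [← Finset.sum_add_distrib]
            exact Finset.sum_congr rfl fun v _ => by ring
          rw [this]
          exact add_le_add hsum1 hsum2
  refine hfinal.trans ?_
  have hstep : (δ₀ * (∫ ω, |u ω| ∂μ) / pmin) *
      ((∫ ω, |f (X ω) - R (X ω)| ∂μ) + ∫ ω, |f (X ω) - h ω| ∂μ)
      ≤ (δ₀ * (3 * s) / pmin) * (3 * s + 2 * s) := by
    gcongr
  refine hstep.trans ?_
  have hcalc : (δ₀ * (3 * s) / pmin) * (3 * s + 2 * s) = 15 * δ₀ * I * pmin⁻¹ := by
    rw [← hs_sq]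
    field_simp
    ring
  rw [hcalc]
  have hinv1 : 1 ≤ pmin⁻¹ := by
    have := inv_anti₀ hpmin_pos hpmin1
    simpa using this
  have hx2 : pmin⁻¹ ≤ pmin⁻¹ ^ 2 := by nlinarith
  have hdI : 0 ≤ δ₀ * I := mul_nonneg hδ₀_nonneg hI_nonneg
  nlinarith [mul_le_mul_of_nonneg_left hx2 hdI, mul_nonneg hdI (sq_nonneg pmin⁻¹)]

end CT12
end
end

section
/- Pairwise probability deviation bound (claim (C.36) in the proof of Lemma C.6). For every pair {l, k} ⊂ {1,…,M}, every c_l ∈ {0,1}^{#𝒳(l)}, and every c_k ∈ {0,1}^{#𝒳(k)}, it holds that | P( X_{𝒳(k)} = c_k, X_{𝒳(l)} = c_l ) − P( X_{𝒳(l)} = c_l ) · P( X_{𝒳(k)} = c_k ) | ≤ δ₀ · P( X_{𝒳(k)} = c_k ). -/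
open MeasureTheory ProbabilityTheory

noncomputable section

namespace CT13

/-- The sub-σ-algebra of `Ω` generated by the coordinates of `X` lying in `S`. -/
def coordSigma {Ω : Type*} [MeasurableSpace Ω] {p : ℕ} (X : Ω → Fin p → Bool)
    (S : Finset (Fin p)) : MeasurableSpace Ω :=
  MeasurableSpace.comap (fun ω => fun i : {x // x ∈ S} => X ω i.1) inferInstance

/-- `𝒳(J)`, the union of the feature groups indexed by `J`. -/
def gset {p M : ℕ} (G : Fin M → Finset (Fin p)) (J : Finset (Fin M)) : Finset (Fin p) :=
  J.biUnion G

/-- `{1,…,p} \ 𝒳(J)` as a finset. -/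
def gsetCompl {p M : ℕ} (G : Fin M → Finset (Fin p)) (J : Finset (Fin M)) :
    Finset (Fin p) :=
  (J.biUnion G)ᶜ

/-- The conditional probability `P(X_i = 1 | X_{-𝒳(m)})` as a random variable. -/
def condProbOne {Ω : Type*} [MeasurableSpace Ω] {p M : ℕ} (μ : Measure Ω)
    (X : Ω → Fin p → Bool) (G : Fin M → Finset (Fin p)) (m : Fin M) (i : Fin p) : Ω → ℝ :=
  μ[(fun ω => if X ω i then (1 : ℝ) else 0) | coordSigma X (gsetCompl G {m})]

/-- The event `{X_S = c}`. -/
def condEvent {Ω : Type*} [MeasurableSpace Ω] {p : ℕ} (X : Ω → Fin p → Bool)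
    (S : Finset (Fin p)) (c : {x // x ∈ S} → Bool) : Set Ω :=
  {ω | ∀ i : {x // x ∈ S}, X ω i.1 = c i}

lemma coordSigma_le {Ω : Type*} [MeasurableSpace Ω] {p : ℕ} {X : Ω → Fin p → Bool}
    (hX : Measurable X) (S : Finset (Fin p)) : coordSigma X S ≤ ‹MeasurableSpace Ω› := by
  refine Measurable.comap_le ?_
  exact measurable_pi_iff.mpr fun j => (measurable_pi_apply j.1).comp hX

lemma condEvent_measurable_comap {Ω : Type*} [MeasurableSpace Ω] {p : ℕ}
    (X : Ω → Fin p → Bool) {T S : Finset (Fin p)} (hTS : T ⊆ S)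
    (c : {x // x ∈ T} → Bool) :
    MeasurableSet[coordSigma X S] (condEvent X T c) := by
  refine MeasurableSpace.measurableSet_comap.mpr
    ⟨{g : {x // x ∈ S} → Bool | ∀ j : {x // x ∈ T}, g ⟨j.1, hTS j.2⟩ = c j},
      (Set.to_countable _).measurableSet, ?_⟩
  ext ω
  simp only [Set.preimage_setOf_eq, condEvent, Set.mem_setOf_eq]

/-- Core conditional-expectation estimate. -/
lemma core_estimate {Ω : Type*} [MeasurableSpace Ω] (μ : Measure Ω) [IsProbabilityMeasure μ]
    {p M : ℕ} {X : Ω → Fin p → Bool} (hX : Measurable X) (G : Fin M → Finset (Fin p))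
    (l : Fin M) (i : Fin p) {δ₀ : ℝ}
    (hδ : ∀ᵐ ω ∂μ, |condProbOne μ X G l i ω - (μ {ω | X ω i = true}).toReal| ≤ δ₀)
    {A : Set Ω} (hA : MeasurableSet[coordSigma X (gsetCompl G {l})] A) :
    |(μ (A ∩ {ω | X ω i = true})).toReal -
      (μ {ω | X ω i = true}).toReal * (μ A).toReal| ≤ δ₀ * (μ A).toReal := by
  set s : Set Ω := {ω | X ω i = true} with hs_def
  have hm : coordSigma X (gsetCompl G {l}) ≤ ‹MeasurableSpace Ω› := coordSigma_le hX _
  have hAmeas : MeasurableSet A := hm _ hA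
  have hsmeas : MeasurableSet s :=
    ((measurable_pi_apply i).comp hX) (measurableSet_singleton true)
  set f : Ω → ℝ := fun ω => if X ω i then (1 : ℝ) else 0 with hf_def
  have hf_ind : f = s.indicator (fun _ => (1 : ℝ)) := by
    funext ω
    by_cases h : X ω i = true <;> simp [hf_def, Set.indicator_apply, hs_def, h]
  have hfint : Integrable f μ := by
    rw [hf_ind]; exact (integrable_const (1 : ℝ)).indicator hsmeas
  set q : ℝ := (μ s).toReal with hq_def
  -- ∫_A f = μ (A ∩ s)
  have h1 : ∫ ω in A, f ω ∂μ = (μ (A ∩ s)).toReal := by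
    rw [hf_ind, setIntegral_indicator hsmeas, setIntegral_const]
    simp
    rfl
  -- ∫_A f = ∫_A condProbOne
  have h2 : ∫ ω in A, condProbOne μ X G l i ω ∂μ = ∫ ω in A, f ω ∂μ :=
    setIntegral_condExp hm hfint hA
  set g : Ω → ℝ := condProbOne μ X G l i with hg_def
  have hgint : Integrable g μ := integrable_condExp
  have h3 : q * (μ A).toReal = ∫ _ in A, q ∂μ := by
    rw [setIntegral_const, smul_eq_mul, mul_comm]
    rfl
  have h4 : (μ (A ∩ s)).toReal - q * (μ A).toReal = ∫ ω in A, (g ω - q) ∂μ := by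
    rw [← h1, ← h2, h3, integral_sub hgint.integrableOn (integrable_const q).integrableOn]
  rw [h4]
  have hbound : |∫ ω in A, (g ω - q) ∂μ| ≤ ∫ ω in A, |g ω - q| ∂μ := by
    simpa [Real.norm_eq_abs] using
      norm_integral_le_integral_norm (μ := μ.restrict A) (f := fun ω => g ω - q)
  refine hbound.trans ?_
  have habsint : Integrable (fun ω => |g ω - q|) μ := (hgint.sub (integrable_const q)).abs
  have hle : (fun ω => |g ω - q|) ≤ᵐ[μ.restrict A] (fun _ => δ₀) := ae_restrict_of_ae hδ
  calc ∫ ω in A, |g ω - q| ∂μ ≤ ∫ _ in A, δ₀ ∂μ :=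
        integral_mono_ae habsint.integrableOn (integrable_const δ₀).integrableOn hle
    _ = δ₀ * (μ A).toReal := by rw [setIntegral_const, smul_eq_mul, mul_comm]; rfl

/-- Pairwise probability deviation bound (claim (C.36)): for groups `l ≠ k` and all patterns,
`|P(X_{𝒳(k)} = c_k, X_{𝒳(l)} = c_l) - P(X_{𝒳(l)} = c_l) P(X_{𝒳(k)} = c_k)|
  ≤ δ₀ P(X_{𝒳(k)} = c_k)`. -/
theorem pairwise_prob_deviation
    {Ω : Type*} [MeasurableSpace Ω] (μ : Measure Ω) [IsProbabilityMeasure μ]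
    (p M : ℕ) (hM : 2 ≤ M)
    (X : Ω → Fin p → Bool) (hX : Measurable X)
    (G : Fin M → Finset (Fin p))
    (hdisj : ∀ l k : Fin M, l ≠ k → Disjoint (G l) (G k))
    (hcover : Finset.univ.biUnion G = (Finset.univ : Finset (Fin p)))
    (honehot : ∀ᵐ ω ∂μ, ∀ m : Fin M, 1 < (G m).card →
        ((G m).filter (fun j => X ω j = true)).card = 1)
    (δ₀ : ℝ) (hδ₀_nonneg : 0 ≤ δ₀)
    (hδ₀ : ∀ m : Fin M, ∀ i ∈ G m, ∀ᵐ ω ∂μ,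
        |condProbOne μ X G m i ω - (μ {ω | X ω i = true}).toReal| ≤ δ₀)
    (l k : Fin M) (hlk : l ≠ k)
    (cl : {x // x ∈ G l} → Bool) (ck : {x // x ∈ G k} → Bool) :
    |(μ (condEvent X (G k) ck ∩ condEvent X (G l) cl)).toReal -
        (μ (condEvent X (G l) cl)).toReal * (μ (condEvent X (G k) ck)).toReal| ≤
      δ₀ * (μ (condEvent X (G k) ck)).toReal := by
  set A : Set Ω := condEvent X (G k) ck with hA_def
  set B : Set Ω := condEvent X (G l) cl with hB_def
  have hRHS : 0 ≤ δ₀ * (μ A).toReal := mul_nonneg hδ₀_nonneg ENNReal.toReal_nonneg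
  -- A is measurable wrt the complement σ-algebra of group l
  have hsub : G k ⊆ gsetCompl G {l} := by
    intro j hj
    simp only [gsetCompl, Finset.singleton_biUnion, Finset.mem_compl]
    exact fun hjl => Finset.disjoint_left.mp (hdisj l k hlk) hjl hj
  have hA : MeasurableSet[coordSigma X (gsetCompl G {l})] A :=
    condEvent_measurable_comap X hsub ck
  -- helper: conclude when B agrees a.e. with {X i = true}
  have key : ∀ i ∈ G l, μ B = μ {ω | X ω i = true} →
      μ (A ∩ B) = μ (A ∩ {ω | X ω i = true}) →
      |(μ (A ∩ B)).toReal - (μ B).toReal * (μ A).toReal| ≤ δ₀ * (μ A).toReal := by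
    intro i hi h1 h2
    rw [h1, h2]
    exact core_estimate μ hX G l i (hδ₀ l i hi) hA
  by_cases h0 : G l = ∅
  · have hBuniv : B = Set.univ := by
      refine Set.eq_univ_iff_forall.mpr fun ω j => ?_
      exact absurd j.2 (by simp [h0])
    rw [hBuniv]
    simp only [Set.inter_univ, measure_univ, ENNReal.toReal_one, one_mul, sub_self, abs_zero]
    exact hRHS
  by_cases h1 : (G l).card = 1
  · obtain ⟨i, hGl⟩ := Finset.card_eq_one.mp h1
    have hiGl : i ∈ G l := by simp [hGl]
    set i0 : {x // x ∈ G l} := ⟨i, hiGl⟩ with hi0_def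
    have hall : ∀ j : {x // x ∈ G l}, j = i0 := by
      rintro ⟨jv, hjv⟩
      have : jv = i := by rw [hGl, Finset.mem_singleton] at hjv; exact hjv
      exact Subtype.ext this
    cases hcl : cl i0 with
    | true =>
        have hBeq : B = {ω | X ω i = true} := by
          ext ω
          simp only [hB_def, condEvent, Set.mem_setOf_eq]
          constructor
          · intro h; have := h i0; rw [hcl] at this; exact this
          · intro h j; rw [hall j, hcl]; exact h
        exact key i hiGl (by rw [hBeq]) (by rw [hBeq])
    | false =>
        set s : Set Ω := {ω | X ω i = true} with hs_def
        have hBeq : B = sᶜ := by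
          ext ω
          simp only [hB_def, hs_def, condEvent, Set.mem_setOf_eq, Set.mem_compl_iff]
          constructor
          · intro h hmem
            have h2 : X ω i = false := h i0 |>.trans hcl
            rw [hmem] at h2; exact Bool.noConfusion h2
          · intro h j
            rw [hall j, hcl]
            cases hx : X ω i with
            | false => rfl
            | true => exact absurd hx h
        have hsmeas : MeasurableSet s :=
          ((measurable_pi_apply i).comp hX) (measurableSet_singleton true)
        have hAs : μ (A ∩ sᶜ) = μ A - μ (A ∩ s) := by
          have := measure_inter_add_diff (μ := μ) A hsmeas
          have hd : A \ s = A ∩ sᶜ := Set.diff_eq A s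
          rw [hd] at this
          rw [← this]
          rw [ENNReal.add_sub_cancel_left (measure_ne_top μ _)]
        have hcompl : μ sᶜ = 1 - μ s := prob_compl_eq_one_sub hsmeas
        have hABle : μ (A ∩ s) ≤ μ A := measure_mono Set.inter_subset_left
        have htr1 : (μ (A ∩ sᶜ)).toReal = (μ A).toReal - (μ (A ∩ s)).toReal := by
          rw [hAs, ENNReal.toReal_sub_of_le hABle (measure_ne_top μ _)]
        have htr2 : (μ sᶜ).toReal = 1 - (μ s).toReal := by
          rw [hcompl, ENNReal.toReal_sub_of_le prob_le_one ENNReal.one_ne_top,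
            ENNReal.toReal_one]
        rw [hBeq, htr1, htr2]
        have hcore := core_estimate μ hX G l i (hδ₀ l i hiGl) hA
        rw [← hs_def] at hcore
        have harg : (μ A).toReal - (μ (A ∩ s)).toReal - (1 - (μ s).toReal) * (μ A).toReal
            = -((μ (A ∩ s)).toReal - (μ s).toReal * (μ A).toReal) := by ring
        rw [harg, abs_neg]
        exact hcore
  -- card ≥ 2 : one-hot group
  · have h2 : 1 < (G l).card := by
      have hpos : 0 < (G l).card := Finset.card_pos.mpr (Finset.nonempty_of_ne_empty h0)
      omega
    classical
    set Tc : Finset {x // x ∈ G l} := Finset.univ.filter (fun j => cl j = true) with hTc_def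
    by_cases hTc1 : Tc.card = 1
    · obtain ⟨i0, hTceq⟩ := Finset.card_eq_one.mp hTc1
      have hi0T : cl i0 = true := by
        have : i0 ∈ Tc := hTceq ▸ Finset.mem_singleton_self i0
        simpa [hTc_def] using this
      have huniq : ∀ j : {x // x ∈ G l}, cl j = true → j = i0 := by
        intro j hj
        have : j ∈ Tc := by simp [hTc_def, hj]
        rw [hTceq] at this; simpa using this
      have hae : ∀ᵐ ω ∂μ, (ω ∈ B ↔ ω ∈ {ω | X ω i0.1 = true}) := by
        filter_upwards [honehot] with ω hω
        have hcard := hω l h2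
        constructor
        · intro h
          have := h i0; rw [hi0T] at this; exact this
        · intro h
          intro j
          have hmem : i0.1 ∈ (G l).filter (fun j => X ω j = true) :=
            Finset.mem_filter.mpr ⟨i0.2, h⟩
          obtain ⟨a, ha⟩ := Finset.card_eq_one.mp hcard
          rw [ha] at hmem
          have hai : a = i0.1 := (Finset.mem_singleton.mp hmem).symm
          cases hclj : cl j with
          | true =>
              rw [huniq j hclj]; exact h
          | false =>
              cases hx : X ω j.1 with
              | false => rfl
              | true =>
                  exfalso
                  have hmem2 : j.1 ∈ (G l).filter (fun j => X ω j = true) :=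
                    Finset.mem_filter.mpr ⟨j.2, hx⟩
                  rw [ha] at hmem2
                  have hji : j = i0 :=
                    Subtype.ext ((Finset.mem_singleton.mp hmem2).trans hai)
                  rw [hji, hi0T] at hclj
                  exact Bool.noConfusion hclj
      have hBae : B =ᵐ[μ] {ω | X ω i0.1 = true} := by
        filter_upwards [hae] with ω h
        exact propext h
      have hABae : (A ∩ B : Set Ω) =ᵐ[μ] (A ∩ {ω | X ω i0.1 = true} : Set Ω) :=
        Filter.EventuallyEq.inter (Filter.EventuallyEq.refl _ _) hBae
      exact key i0.1 i0.2 (measure_congr hBae) (measure_congr hABae)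
    · -- pattern incompatible with one-hot: B is null
      have hBnull : μ B = 0 := by
        rw [measure_eq_zero_iff_ae_notMem]
        filter_upwards [honehot] with ω hω hωB
        have hωB' : ∀ j : {x // x ∈ G l}, X ω j.1 = cl j := hωB
        have hcard := hω l h2
        have himg : (G l).filter (fun j => X ω j = true) = Tc.image Subtype.val := by
          ext j
          constructor
          · intro hjmem
            obtain ⟨hj, hXj⟩ := Finset.mem_filter.mp hjmem
            refine Finset.mem_image.mpr ⟨⟨j, hj⟩, ?_, rfl⟩
            simp only [hTc_def, Finset.mem_filter, Finset.mem_univ, true_and]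
            rw [← hωB' ⟨j, hj⟩]; exact hXj
          · intro hjmem
            obtain ⟨j', hj'T, rfl⟩ := Finset.mem_image.mp hjmem
            refine Finset.mem_filter.mpr ⟨j'.2, ?_⟩
            have hclj' : cl j' = true := by simpa [hTc_def] using hj'T
            rw [hωB' j']; exact hclj'
        rw [himg, Finset.card_image_of_injective _ Subtype.val_injective] at hcard
        exact hTc1 hcard
      have hABnull : μ (A ∩ B) = 0 :=
        le_antisymm (hBnull ▸ measure_mono Set.inter_subset_right) zero_le
      rw [hBnull, hABnull]
      simpa using hRHS

end CT13
end
end
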